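/- arXiv:1702.07500 — 7 statements merged into one kernel-verified Lean document; each statement's English description precedes it below -/
import Mathlib

section
/- Let $p$ be an odd prime power. Then the multiset $\{0\} \cup \underline{2}\mathbb{F}_p^{\Box}$, consisting of $0$ together with each nonzero square of $\mathbb{F}_p$ taken twice, is an $(\mathbb{F}_p, p, p-1)$ strong difference family (with a single base block); i.e., every element of $\mathbb{F}_p$ occurs exactly $p-1$ times among the differences of distinct positions of this multiset. -/
open scoped Classical

/-- The multiset of differences over all ordered pairs of *distinct positions* of a
multiset `M`: all differences of ordered pairs of elements (with multiplicity), minus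
one copy of `0` for each position paired with itself. -/
def msetDiffs {G : Type*} [AddCommGroup G] [DecidableEq G] (M : Multiset G) : Multiset G :=
  (M.bind fun x => M.map fun y => x - y) - Multiset.replicate (Multiset.card M) 0

section Aux

variable {F : Type*} [Field F] [Fintype F] [DecidableEq F]

lemma aux_shift (hF : ringChar F ≠ 2) {g : F} (hg : g ≠ 0) :
    ∑ x : F, quadraticChar F x * quadraticChar F (x - g) = -1 := by
  set χ := quadraticChar F with hχ
  have h1 : ∀ x : F, χ x * χ (x - g) = χ (x * (x - g)) := fun x => (map_mul χ _ _).symm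
  calc ∑ x : F, χ x * χ (x - g) = ∑ x : F, χ (x * (x - g)) := by
        exact Finset.sum_congr rfl fun x _ => h1 x
    _ = ∑ x ∈ Finset.univ \ {(0 : F)}, χ (x * (x - g)) := by
        rw [Finset.sum_eq_sum_sdiff_singleton_add (Finset.mem_univ (0 : F))]
        simp [hχ, quadraticChar_zero]
    _ = ∑ x ∈ Finset.univ \ {(0 : F)}, χ (1 - g * x⁻¹) := by
        refine Finset.sum_congr rfl fun x hx => ?_
        have hx0 : x ≠ 0 := by simpa using (Finset.mem_sdiff.mp hx).2
        have hrw : x * (x - g) = x ^ 2 * (1 - g * x⁻¹) := by field_simp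
        rw [hrw, map_mul, quadraticChar_sq_one' hx0, one_mul]
    _ = ∑ y ∈ Finset.univ \ {(1 : F)}, χ y := by
        refine Finset.sum_nbij' (fun x => 1 - g * x⁻¹) (fun y => g * (1 - y)⁻¹)
          ?_ ?_ ?_ ?_ ?_
        · intro x hx
          have hx0 : x ≠ 0 := by simpa using (Finset.mem_sdiff.mp hx).2
          simp only [Finset.mem_sdiff, Finset.mem_univ, Finset.mem_singleton, true_and]
          intro h
          have : g * x⁻¹ = 0 := by linear_combination -h
          rcases mul_eq_zero.mp this with h' | h'
          · exact hg h'
          · exact hx0 (inv_eq_zero.mp h')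
        · intro y hy
          have hy1 : y ≠ 1 := by simpa using (Finset.mem_sdiff.mp hy).2
          have h1y : (1 : F) - y ≠ 0 := sub_ne_zero.mpr (Ne.symm hy1)
          simp only [Finset.mem_sdiff, Finset.mem_univ, Finset.mem_singleton, true_and]
          exact mul_ne_zero hg (inv_ne_zero h1y)
        · intro x hx
          have hx0 : x ≠ 0 := by simpa using (Finset.mem_sdiff.mp hx).2
          field_simp
          rw [sub_sub_cancel, div_self hg]
        · intro y hy
          have hy1 : y ≠ 1 := by simpa using (Finset.mem_sdiff.mp hy).2
          have h1y : (1 : F) - y ≠ 0 := sub_ne_zero.mpr (Ne.symm hy1)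
          field_simp
          ring
        · intro x hx; rfl
    _ = -1 := by
        have hsum : ∑ a : F, χ a = 0 := quadraticChar_sum_zero hF
        rw [Finset.sum_eq_sum_sdiff_singleton_add (Finset.mem_univ (1 : F)) χ] at hsum
        have hone : χ 1 = 1 := map_one χ
        linarith

end Aux

/-- Paley difference multiset of the first type: for an odd prime power `p` (a finite
field `F` of odd order), the multiset `{0} ∪ 2·F□` consisting of `0` together with each
nonzero square taken twice is an `(F_p, p, p-1)` strong difference family: it has size
`p` and every element of `F_p` occurs exactly `p-1` times among the differences of its
distinct positions. -/
theorem paper_stmt_3 {F : Type*} [Field F] [Fintype F] [DecidableEq F]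
    (hodd : Odd (Fintype.card F)) :
    let M : Multiset F :=
      (0 : F) ::ₘ (2 • (Finset.univ.filter fun x : F => x ≠ 0 ∧ IsSquare x).val)
    Multiset.card M = Fintype.card F ∧
      ∀ g : F, Multiset.count g (msetDiffs M) = Fintype.card F - 1 := by
  intro M
  set χ := quadraticChar F with hχdef
  have hF : ringChar F ≠ 2 := by
    intro h
    have h2 := FiniteField.even_card_of_char_two h
    rcases hodd with ⟨k, hk⟩
    omega
  have hq1 : 1 ≤ Fintype.card F := Fintype.card_pos
  -- counts of M
  have hc : ∀ x : F, (M.count x : ℤ) = 1 + χ x := by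
    intro x
    have hcount2 : M.count x =
        (2 • (Finset.univ.filter fun x : F => x ≠ 0 ∧ IsSquare x).val).count x
          + if x = 0 then 1 else 0 := by
      simp [M, Multiset.count_cons]
    rw [hcount2, Multiset.count_nsmul]
    by_cases hx0 : x = 0
    · subst hx0
      simp [Multiset.count_eq_zero, hχdef, quadraticChar_zero]
    by_cases hxs : IsSquare x
    · have hmem : x ∈ (Finset.univ.filter fun x : F => x ≠ 0 ∧ IsSquare x) := by
        simp [hx0, hxs]
      have : (Finset.univ.filter fun x : F => x ≠ 0 ∧ IsSquare x).val.count x = 1 :=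
        Multiset.count_eq_one_of_mem (Finset.univ.filter _).nodup hmem
      rw [this]
      have := (quadraticChar_one_iff_isSquare (F := F) hx0).mpr hxs
      simp [hx0, hχdef, this]
    · have hmem : x ∉ (Finset.univ.filter fun x : F => x ≠ 0 ∧ IsSquare x) := by
        simp [hx0, hxs]
      have : (Finset.univ.filter fun x : F => x ≠ 0 ∧ IsSquare x).val.count x = 0 :=
        Multiset.count_eq_zero_of_notMem hmem
      rw [this]
      have := (quadraticChar_neg_one_iff_not_isSquare (F := F) (a := x)).mpr hxs
      simp [hx0, hχdef, this]
  -- total over univ of counts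
  have hsumχ : ∑ x : F, χ x = 0 := quadraticChar_sum_zero hF
  have hcard : (Multiset.card M : ℤ) = Fintype.card F := by
    have h1 : ∑ a ∈ M.toFinset, M.count a = Multiset.card M :=
      Multiset.toFinset_sum_count_eq M
    have h2 : ∑ a ∈ M.toFinset, M.count a = ∑ a : F, M.count a := by
      refine Finset.sum_subset (Finset.subset_univ _) ?_
      intro x _ hx
      simpa [Multiset.count_eq_zero] using fun h => hx (Multiset.mem_toFinset.mpr h)
    rw [← h1, h2]
    push_cast
    rw [Finset.sum_congr rfl fun x _ => hc x]
    rw [Finset.sum_add_distrib, hsumχ]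
    simp
  have hcardM : Multiset.card M = Fintype.card F := by exact_mod_cast hcard
  refine ⟨hcardM, ?_⟩
  intro g
  -- count in the bind
  have hbind : (Multiset.count g (M.bind fun x => M.map fun y => x - y) : ℤ)
      = ∑ x : F, (1 + χ x) * (1 + χ (x - g)) := by
    have h1 : Multiset.count g (M.bind fun x => M.map fun y => x - y)
        = (M.map fun x => M.count (x - g)).sum := by
      rw [Multiset.count_bind]
      congr 1
      refine Multiset.map_congr rfl ?_
      intro x _
      have hinj : Function.Injective fun y : F => x - y := sub_right_injective
      have hgeq : g = (fun y : F => x - y) (x - g) := by simp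
      conv_lhs => rw [hgeq]
      rw [Multiset.count_map_eq_count' _ _ hinj]
    have h2 : (M.map fun x => M.count (x - g)).sum
        = ∑ x ∈ M.toFinset, M.count x * M.count (x - g) := by
      rw [Finset.sum_multiset_map_count]
      simp [smul_eq_mul]
    have h3 : ∑ x ∈ M.toFinset, M.count x * M.count (x - g)
        = ∑ x : F, M.count x * M.count (x - g) := by
      refine Finset.sum_subset (Finset.subset_univ _) ?_
      intro x _ hx
      have : M.count x = 0 := by
        simpa [Multiset.count_eq_zero] using fun h => hx (Multiset.mem_toFinset.mpr h)
      simp [this]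
    rw [h1, h2, h3]
    push_cast
    exact Finset.sum_congr rfl fun x _ => by rw [hc x, hc (x - g)]
  have hshiftsum : ∑ x : F, χ (x - g) = 0 := by
    rw [← hsumχ]
    exact Fintype.sum_equiv (Equiv.subRight g) _ _ fun x => rfl
  have hexpand : ∑ x : F, (1 + χ x) * (1 + χ (x - g))
      = (Fintype.card F : ℤ) + ∑ x : F, χ x * χ (x - g) := by
    have : ∀ x : F, (1 + χ x) * (1 + χ (x - g))
        = 1 + χ x + χ (x - g) + χ x * χ (x - g) := fun x => by ring
    rw [Finset.sum_congr rfl fun x _ => this x]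
    rw [Finset.sum_add_distrib, Finset.sum_add_distrib, Finset.sum_add_distrib,
      hsumχ, hshiftsum]
    simp [Finset.card_univ]
  by_cases hg : g = 0
  · subst hg
    have hsq : ∑ x : F, χ x * χ (x - 0) = (Fintype.card F : ℤ) - 1 := by
      have : ∀ x : F, χ x * χ (x - 0) = if x = 0 then 0 else 1 := by
        intro x
        by_cases hx : x = 0
        · simp [hx, hχdef, quadraticChar_zero]
        · rw [sub_zero, ← sq, quadraticChar_sq_one hx]
          simp [hx]
      rw [Finset.sum_congr rfl fun x _ => this x]
      rw [Finset.sum_ite, Finset.sum_const, Finset.sum_const]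
      rw [Finset.filter_eq', Finset.filter_ne']
      simp [Finset.card_univ, Finset.card_erase_of_mem]
      omega
    have hbind0 : Multiset.count 0 (M.bind fun x => M.map fun y => x - y)
        = 2 * Fintype.card F - 1 := by
      have : (Multiset.count 0 (M.bind fun x => M.map fun y => x - y) : ℤ)
          = 2 * Fintype.card F - 1 := by
        rw [hbind, hexpand, hsq]; ring
      omega
    rw [msetDiffs, Multiset.count_sub, hbind0, hcardM, Multiset.count_replicate]
    simp
    omega
  · have hsq : ∑ x : F, χ x * χ (x - g) = -1 := aux_shift hF hg
    have hbindg : Multiset.count g (M.bind fun x => M.map fun y => x - y)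
        = Fintype.card F - 1 := by
      have h : (Multiset.count g (M.bind fun x => M.map fun y => x - y) : ℤ)
          = Fintype.card F - 1 := by
        rw [hbind, hexpand, hsq]; ring
      omega
    rw [msetDiffs, Multiset.count_sub, hbindg, Multiset.count_replicate, if_neg fun h => hg h.symm, Nat.sub_zero]
end

section
/- Let $p \equiv 3 \pmod 4$ be a prime power. Then the multiset $\underline{2}(\{0\} \cup \mathbb{F}_p^{\Box})$, consisting of $0$ and each nonzero square of $\mathbb{F}_p$, all taken with multiplicity $2$, is an $(\mathbb{F}_p, p+1, p+1)$ strong difference family with a single base block; i.e., every element of $\mathbb{F}_p$ occurs exactly $p+1$ times among the differences of distinct positions of this multiset. -/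
open scoped Classical

namespace PaleyAux
open Finset

variable {F : Type*} [Field F] [Fintype F] [DecidableEq F]

lemma char_ne_two (hp : Fintype.card F % 4 = 3) : ringChar F ≠ 2 := by
  intro h
  have := FiniteField.even_card_iff_char_two.mp h
  omega

lemma neg_one_not_square (hp : Fintype.card F % 4 = 3) : ¬ IsSquare (-1 : F) := by
  rw [FiniteField.isSquare_neg_one_iff]
  omega

lemma square_xor (hp : Fintype.card F % 4 = 3) {g : F} (hg : g ≠ 0) :
    IsSquare g ↔ ¬ IsSquare (-g) := by
  constructor
  · intro h h'
    apply neg_one_not_square hp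
    have : (-1 : F) = (-g) * g⁻¹ := by field_simp
    rw [this]
    exact h'.mul ((isSquare_inv (a := g)).mpr h)
  · intro h'
    by_contra h
    have hg1 : quadraticChar F g = -1 := quadraticChar_neg_one_iff_not_isSquare.mpr h
    have hg2 : quadraticChar F (-g) = -1 := quadraticChar_neg_one_iff_not_isSquare.mpr h'
    have : quadraticChar F (-g) = quadraticChar F (-1) * quadraticChar F g := by
      rw [← map_mul]; ring_nf
    rw [hg1, hg2] at this
    have h1 : quadraticChar F (-1) = 1 := by linarith
    exact neg_one_not_square hp ((quadraticChar_one_iff_isSquare (by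
      simp : (-1 : F) ≠ 0)).mp h1)

/-- number of square roots -/
noncomputable def r (a : F) : ℕ := (univ.filter fun u : F => u ^ 2 = a).card

lemma r_zero : r (0 : F) = 1 := by
  have : (univ.filter fun u : F => u ^ 2 = 0) = {(0 : F)} := by
    ext u; simp [sq_eq_zero_iff]
  rw [r, this, card_singleton]

lemma r_square (hp : Fintype.card F % 4 = 3) {a : F} (ha : a ≠ 0) (hs : IsSquare a) :
    r a = 2 := by
  obtain ⟨s, rfl⟩ := hs
  have hs0 : s ≠ 0 := by rintro rfl; simp at ha
  have hset : (univ.filter fun u : F => u ^ 2 = s * s) = {s, -s} := by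
    ext u
    simp only [mem_filter, mem_univ, true_and, mem_insert, mem_singleton]
    constructor
    · intro h
      have h' : (u - s) * (u + s) = 0 := by ring_nf; linear_combination h
      rcases mul_eq_zero.mp h' with h' | h'
      · left; exact sub_eq_zero.mp h'
      · right; exact eq_neg_of_add_eq_zero_left h'
    · rintro (rfl | rfl) <;> ring
  rw [r, hset, card_insert_of_notMem, card_singleton]
  simp only [mem_singleton]
  intro h
  have h2 : (2 : F) ≠ 0 := Ring.two_ne_zero (char_ne_two hp)
  apply hs0
  have : (2 : F) * s = 0 := by linear_combination h
  rcases mul_eq_zero.mp this with h' | h'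
  · exact absurd h' h2
  · exact h'

lemma r_nonsquare {a : F} (hs : ¬ IsSquare a) : r a = 0 := by
  rw [r, card_eq_zero, filter_eq_empty_iff]
  intro u _ h
  exact hs ⟨u, by rw [← h]; ring⟩




lemma card_T (hp : Fintype.card F % 4 = 3) {g : F} (hg : g ≠ 0) :
    (univ.filter fun p : F × F => p.1 ^ 2 - p.2 ^ 2 = g).card = Fintype.card F - 1 := by
  have h2 : (2 : F) ≠ 0 := Ring.two_ne_zero (char_ne_two hp)
  have : (univ.filter fun p : F × F => p.1 ^ 2 - p.2 ^ 2 = g).card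
      = ((univ : Finset F).erase 0).card := by
    apply Finset.card_nbij' (i := fun p => p.1 + p.2)
      (j := fun s => ((s + g * s⁻¹) / 2, (s - g * s⁻¹) / 2))
    · intro p hp'
      simp only [mem_coe, mem_filter, mem_univ, true_and] at hp'
      simp only [mem_coe, mem_erase, mem_univ, and_true]
      intro h
      apply hg
      rw [← hp']
      have : p.2 = -p.1 := by linear_combination h
      rw [this]; ring
    · intro s hs
      simp only [mem_coe, mem_erase, mem_univ, and_true] at hs
      simp only [mem_coe, mem_filter, mem_univ, true_and]
      field_simp
      ring
    · intro p hp'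
      simp only [mem_coe, mem_filter, mem_univ, true_and] at hp'
      have hsum : p.1 + p.2 ≠ 0 := by
        intro h
        apply hg; rw [← hp']
        have : p.2 = -p.1 := by linear_combination h
        rw [this]; ring
      have hginv : g * (p.1 + p.2)⁻¹ = p.1 - p.2 := by
        rw [← hp']
        field_simp
        ring
      ext
      · simp only [hginv]; field_simp; ring
      · simp only [hginv]; field_simp; ring
    · intro s hs
      simp only [mem_coe, mem_erase, mem_univ, and_true] at hs
      field_simp
      ring
  rw [this, card_erase_of_mem (mem_univ 0), card_univ]

lemma card_T_eq_sum (hp : Fintype.card F % 4 = 3) (g : F) :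
    (univ.filter fun p : F × F => p.1 ^ 2 - p.2 ^ 2 = g).card
      = ∑ a ∈ univ.filter (fun a : F => IsSquare a ∧ IsSquare (a - g)), r a * r (a - g) := by
  rw [Finset.card_eq_sum_card_fiberwise (f := fun p : F × F => p.1 ^ 2)
    (t := univ.filter (fun a : F => IsSquare a ∧ IsSquare (a - g)))]
  · apply Finset.sum_congr rfl
    intro a ha
    have hfib : ((univ.filter fun p : F × F => p.1 ^ 2 - p.2 ^ 2 = g).filter
        fun p => p.1 ^ 2 = a)
        = (univ.filter fun u : F => u ^ 2 = a) ×ˢ (univ.filter fun u : F => u ^ 2 = a - g) := by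
      ext p
      simp only [mem_filter, mem_univ, true_and, mem_product]
      constructor
      · rintro ⟨h1, h2⟩
        exact ⟨h2, by rw [← h2, ← h1]; ring⟩
      · rintro ⟨h1, h2⟩
        exact ⟨by rw [h1, h2]; ring, h1⟩
    rw [hfib, card_product]
    rfl
  · intro p hp'
    simp only [mem_coe, mem_filter, mem_univ, true_and] at hp' ⊢
    refine ⟨⟨p.1, by ring⟩, ⟨p.2, ?_⟩⟩
    rw [← hp']; ring

lemma card_D (hp : Fintype.card F % 4 = 3) {g : F} (hg : g ≠ 0) :
    4 * (univ.filter fun a : F => IsSquare a ∧ IsSquare (a - g)).card = Fintype.card F + 1 := by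
  set D := univ.filter (fun a : F => IsSquare a ∧ IsSquare (a - g)) with hD
  set e : F := if IsSquare g then g else 0 with he
  have hxor := square_xor hp hg
  have heD : e ∈ D := by
    rw [hD, mem_filter]
    refine ⟨mem_univ _, ?_⟩
    by_cases h : IsSquare g
    · rw [he, if_pos h]; exact ⟨h, by simpa using isSquare_zero⟩
    · rw [he, if_neg h]
      refine ⟨IsSquare.zero, ?_⟩
      simp only [zero_sub]
      by_contra h'
      exact h (hxor.mpr h')
  have hwe : r e * r (e - g) = 2 := by
    by_cases h : IsSquare g
    · rw [he, if_pos h, sub_self, r_zero, r_square hp hg h]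
    · rw [he, if_neg h, zero_sub, r_zero, r_square hp (neg_ne_zero.mpr hg) (by
        by_contra h'
        exact h (hxor.mpr h'))]
  have hrest : ∀ a ∈ D.erase e, r a * r (a - g) = 4 := by
    intro a ha
    rw [mem_erase, hD, mem_filter] at ha
    obtain ⟨hne, _, hsq, hsq'⟩ := ha
    have ha0 : a ≠ 0 := by
      rintro rfl
      rw [zero_sub] at hsq'
      apply hne
      rw [he, if_neg (fun h => hxor.mp h hsq')]
    have hag : a - g ≠ 0 := by
      intro h
      have : a = g := by linear_combination h
      subst this
      apply hne
      rw [he, if_pos hsq]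
    rw [r_square hp ha0 hsq, r_square hp hag hsq']
  have hsum : (univ.filter fun p : F × F => p.1 ^ 2 - p.2 ^ 2 = g).card
      = ∑ a ∈ D, r a * r (a - g) := card_T_eq_sum hp g
  rw [card_T hp hg, ← Finset.add_sum_erase _ _ heD, hwe,
    Finset.sum_congr rfl hrest, Finset.sum_const, smul_eq_mul,
    card_erase_of_mem heD] at hsum
  have hcard : 1 ≤ D.card := card_pos.mpr ⟨e, heD⟩
  have hq : 3 ≤ Fintype.card F := by omega
  omega

lemma card_S (hp : Fintype.card F % 4 = 3) :
    2 * (univ.filter fun a : F => IsSquare a).card = Fintype.card F + 1 := by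
  set S := univ.filter (fun a : F => IsSquare a) with hS
  have h0S : (0 : F) ∈ S := by simp [hS]
  have hcard : (univ : Finset F).card = ∑ a ∈ S, r a := by
    rw [Finset.card_eq_sum_card_fiberwise (f := fun u : F => u ^ 2) (t := S)]
    · rfl
    · intro u _
      simp only [mem_coe, hS, mem_filter, mem_univ, true_and]
      exact ⟨u, by ring⟩
  rw [← Finset.add_sum_erase _ _ h0S, r_zero] at hcard
  have hrest : ∀ a ∈ S.erase 0, r a = 2 := by
    intro a ha
    rw [mem_erase, hS, mem_filter] at ha
    exact r_square hp ha.1 ha.2.2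
  rw [Finset.sum_congr rfl hrest, Finset.sum_const, smul_eq_mul,
    card_erase_of_mem h0S, card_univ] at hcard
  have h1 : 1 ≤ S.card := card_pos.mpr ⟨0, h0S⟩
  omega

end PaleyAux

/-- Paley difference multiset of the second type: for a prime power `p ≡ 3 (mod 4)`
(a finite field `F` with `|F| ≡ 3 (mod 4)`), the multiset `2·({0} ∪ F□)` consisting of
`0` and each nonzero square all taken with multiplicity `2` is an `(F_p, p+1, p+1)`
strong difference family: it has size `p+1` and every element of `F_p` occurs exactly
`p+1` times among the differences of its distinct positions. -/
theorem paper_stmt_4 {F : Type*} [Field F] [Fintype F] [DecidableEq F]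
    (hp : Fintype.card F % 4 = 3) :
    let M : Multiset F :=
      2 • ((0 : F) ::ₘ (Finset.univ.filter fun x : F => x ≠ 0 ∧ IsSquare x).val)
    Multiset.card M = Fintype.card F + 1 ∧
      ∀ g : F, Multiset.count g (msetDiffs M) = Fintype.card F + 1 := by
  intro M
  classical
  set S : Finset F := Finset.univ.filter (fun a : F => IsSquare a) with hS
  have hSval : ((0 : F) ::ₘ (Finset.univ.filter fun x : F => x ≠ 0 ∧ IsSquare x).val)
      = S.val := by
    have h0 : (0 : F) ∉ (Finset.univ.filter fun x : F => x ≠ 0 ∧ IsSquare x) := by simp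
    rw [← Finset.insert_val_of_notMem h0]
    congr 1
    ext x
    by_cases hx : x = 0 <;> simp [hS, hx]
  have hM : M = S.val + S.val := by
    show 2 • ((0 : F) ::ₘ (Finset.univ.filter fun x : F => x ≠ 0 ∧ IsSquare x).val)
      = S.val + S.val
    rw [hSval, two_smul]
  have hcardM : Multiset.card M = Fintype.card F + 1 := by
    rw [hM, Multiset.card_add]
    have : Multiset.card S.val = S.card := rfl
    rw [this]
    have := PaleyAux.card_S (F := F) hp
    rw [← hS] at this
    omega
  refine ⟨hcardM, fun g => ?_⟩
  -- count of g among all ordered differences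
  have key : ∀ x : F, Multiset.count g (Multiset.map (fun y => x - y) M)
      = 2 * (if IsSquare (x - g) then 1 else 0) := by
    intro x
    have hinj : Function.Injective (fun y : F => x - y) := by
      intro a b h
      simpa using h
    have hgx : g = (fun y : F => x - y) (x - g) := by simp
    rw [hM, Multiset.map_add, Multiset.count_add, hgx,
      Multiset.count_map_eq_count' _ _ hinj,
      Multiset.count_eq_of_nodup S.nodup]
    have : (x - g) ∈ S.val ↔ IsSquare (x - g) := by
      simp [hS]
    by_cases h : IsSquare (x - g) <;> simp [this, h]
  have hbind : Multiset.count g (M.bind fun x => Multiset.map (fun y => x - y) M)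
      = 4 * (Finset.univ.filter fun a : F => IsSquare a ∧ IsSquare (a - g)).card := by
    rw [Multiset.count_bind]
    have hmapeq : Multiset.map (fun x => Multiset.count g (Multiset.map (fun y => x - y) M)) M
        = Multiset.map (fun x => 2 * (if IsSquare (x - g) then 1 else 0)) M := by
      apply Multiset.map_congr rfl
      intro x _
      exact key x
    rw [hmapeq, hM, Multiset.map_add, Multiset.sum_add]
    have hsum : (Multiset.map (fun x => 2 * (if IsSquare (x - g) then 1 else 0)) S.val).sum
        = ∑ x ∈ S, 2 * (if IsSquare (x - g) then 1 else 0) := rfl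
    rw [hsum, ← Finset.mul_sum]
    have hb : ∑ x ∈ S, (if IsSquare (x - g) then 1 else 0)
        = (S.filter fun x => IsSquare (x - g)).card := by
      simp [Finset.sum_boole]
    rw [hb, hS, Finset.filter_filter]
    ring
  have hrepl : Multiset.count g (Multiset.replicate (Multiset.card M) (0 : F))
      = if g = 0 then Fintype.card F + 1 else 0 := by
    rw [Multiset.count_replicate, hcardM]
    by_cases h : g = 0 <;> simp [h, eq_comm]
  rw [msetDiffs, Multiset.count_sub, hbind, hrepl]
  by_cases hg : g = 0
  · subst hg
    have hD0 : (Finset.univ.filter fun a : F => IsSquare a ∧ IsSquare (a - 0)) = S := by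
      rw [hS]
      congr 1
      ext a
      simp [sub_zero, and_self]
    rw [hD0, if_pos rfl]
    have := PaleyAux.card_S (F := F) hp
    rw [← hS] at this
    omega
  · rw [if_neg hg]
    have := PaleyAux.card_D (F := F) hp hg
    omega
end

section
/- The family of three multisets $F_1=[0,3,3,8,8,17,17,23,23]$, $F_2=[0,1,2,3,19,4,5,8,12]$, $F_3=[0,1,2,3,19,6,11,13,17]$ over $\mathbb{Z}_{27}$ is a $(\mathbb{Z}_{27},9,8)$ strong difference family: every element of $\mathbb{Z}_{27}$ occurs exactly $8$ times among the differences of distinct positions of the $F_i$. -/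
open scoped Classical

/-- The multiset of differences `f a - f b` over all ordered pairs `(a,b)` of distinct
positions of the block represented by the tuple `f`. -/
def blockDiffs {G : Type*} [AddCommGroup G] {k : ℕ} (f : Fin k → G) : Multiset G :=
  (Finset.univ.offDiag : Finset (Fin k × Fin k)).val.map fun p => f p.1 - f p.2

set_option maxRecDepth 100000 in
/-- The three multisets `F₁ = [0,3,3,8,8,17,17,23,23]`, `F₂ = [0,1,2,3,19,4,5,8,12]`,
`F₃ = [0,1,2,3,19,6,11,13,17]` over `ℤ₂₇` form a `(ℤ₂₇, 9, 8)` strong difference family: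
every element of `ℤ₂₇` occurs exactly `8` times among the differences of distinct
positions of the `Fᵢ`. -/
theorem paper_stmt_6 :
    let F₁ : Fin 9 → ZMod 27 := ![0, 3, 3, 8, 8, 17, 17, 23, 23]
    let F₂ : Fin 9 → ZMod 27 := ![0, 1, 2, 3, 19, 4, 5, 8, 12]
    let F₃ : Fin 9 → ZMod 27 := ![0, 1, 2, 3, 19, 6, 11, 13, 17]
    ∀ g : ZMod 27,
      Multiset.count g (blockDiffs F₁ + blockDiffs F₂ + blockDiffs F₃) = 8 := by
  intro F₁ F₂ F₃ g
  unfold blockDiffs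
  revert g
  decide
end

section
/- If there exist a $(G,N,k,\lambda)$ relative difference family and a $2$-$(|N|+1,k,\lambda)$ design, then there exists a $2$-$(|G|+1,k,\lambda)$ design. -/
open scoped Classical

def finsetDiffs {G : Type*} [AddCommGroup G] [DecidableEq G] (B : Finset G) : Multiset G :=
  B.offDiag.val.map fun p => p.1 - p.2

def Is2Design {V : Type*} [Fintype V] [DecidableEq V]
    (𝒜 : Multiset (Finset V)) (k lam : ℕ) : Prop :=
  (∀ b ∈ 𝒜, b.card = k) ∧
    ∀ x y : V, x ≠ y → Multiset.countP (fun b => x ∈ b ∧ y ∈ b) 𝒜 = lam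

lemma my_countP_sum {α β : Type*} (s : Finset β) (f : β → Multiset α)
    (p : α → Prop) [DecidablePred p] :
    (∑ b ∈ s, f b).countP p = ∑ b ∈ s, (f b).countP p := by
  classical
  induction s using Finset.cons_induction with
  | empty => simp
  | cons a s ha ih =>
    rw [Finset.sum_cons, Finset.sum_cons, Multiset.countP_add, ih]

lemma my_design_map {V W : Type*} [Fintype V] [DecidableEq V] [Fintype W] [DecidableEq W]
    (e : V ≃ W) {𝒜 : Multiset (Finset V)} {k lam : ℕ} (h : Is2Design 𝒜 k lam) :
    Is2Design (𝒜.map (Finset.map e.toEmbedding)) k lam := by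
  constructor
  · intro b hb
    obtain ⟨c, hc, rfl⟩ := Multiset.mem_map.mp hb
    simpa using h.1 c hc
  · intro x y hxy
    have h2 := h.2 (e.symm x) (e.symm y) (fun hc => hxy (by simpa using congrArg e hc))
    rw [Multiset.countP_map]
    rw [Multiset.countP_eq_card_filter] at h2
    rw [← h2]
    congr 1
    apply Multiset.filter_congr
    intro b _
    simp [Finset.mem_map_equiv]

lemma fib_card {G : Type*} [AddCommGroup G] [Fintype G] [DecidableEq G] (N : AddSubgroup G)
    (q : G ⧸ N) : Fintype.card {x : G // (QuotientAddGroup.mk x : G ⧸ N) = q} = Nat.card N := by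
  rw [Nat.card_eq_fintype_card]
  refine Fintype.card_congr (Equiv.symm ?_)
  refine ⟨fun n => ⟨q.out + n, by
      rw [QuotientAddGroup.mk_add_of_mem _ n.2, QuotientAddGroup.out_eq']⟩,
    fun x => ⟨x.1 - q.out, by
      rw [← QuotientAddGroup.eq_iff_sub_mem, x.2, QuotientAddGroup.out_eq']⟩,
    fun n => by ext; simp, fun x => by ext; simp⟩

lemma key_step {G : Type*} [AddCommGroup G] [Fintype G] [DecidableEq G]
    (N : AddSubgroup G) {r k lam : ℕ}
    (B : Fin r → Finset G) (hcard : ∀ i, (B i).card = k)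
    (hDF : ∀ g : G, Multiset.count g (∑ i, finsetDiffs (B i)) = if g ∈ N then 0 else lam)
    (𝒜0 : Multiset (Finset (Fin (Nat.card N + 1)))) (h0 : Is2Design 𝒜0 k lam) :
    ∃ 𝒜 : Multiset (Finset (Option G)), Is2Design 𝒜 k lam := by
  classical
  haveI : Fintype (G ⧸ N) := Fintype.ofFinite _
  have hfibcard : ∀ q : G ⧸ N,
      Fintype.card (Option {x : G // (QuotientAddGroup.mk x : G ⧸ N) = q}) = Nat.card N + 1 := by
    intro q; rw [Fintype.card_option, fib_card]
  let e2 : ∀ q : G ⧸ N,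
      Fin (Nat.card N + 1) ≃ Option {x : G // (QuotientAddGroup.mk x : G ⧸ N) = q} :=
    fun q => (Fintype.equivFinOfCardEq (hfibcard q)).symm
  let j : ∀ q : G ⧸ N, Option {x : G // (QuotientAddGroup.mk x : G ⧸ N) = q} ↪ Option G :=
    fun q => ⟨Option.map Subtype.val, Option.map_injective Subtype.val_injective⟩
  let smallB : G ⧸ N → Multiset (Finset (Option G)) :=
    fun q => 𝒜0.map fun b => (b.map (e2 q).toEmbedding).map (j q)
  let T : Fin r → G → Finset (Option G) :=
    fun i g => (B i).map ⟨fun a => some (a + g), fun a b h => by simpa using h⟩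
  let trs : Multiset (Finset (Option G)) :=
    ∑ i : Fin r, (Finset.univ.val : Multiset G).map (T i)
  -- membership in translates
  have memT : ∀ (i : Fin r) (g u : G), some u ∈ T i g ↔ u - g ∈ B i := by
    intro i g u
    simp only [T, Finset.mem_map, Function.Embedding.coeFn_mk, Option.some.injEq]
    constructor
    · rintro ⟨a, ha, h⟩
      have h' : a + g = u := Option.some.inj h
      subst h'
      simpa using ha
    · intro h
      exact ⟨u - g, h, by show some (u - g + g) = some u; simp⟩
  have noneT : ∀ (i : Fin r) (g : G), (none : Option G) ∉ T i g := by
    intro i g h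
    simp only [T, Finset.mem_map, Function.Embedding.coeFn_mk] at h
    obtain ⟨a, _, h⟩ := h
    exact Option.some_ne_none _ h
  -- membership in small blocks
  have mem_small : ∀ (q : G ⧸ N) (z : Option {x : G // (QuotientAddGroup.mk x : G ⧸ N) = q})
      (b : Finset (Fin (Nat.card N + 1))),
      j q z ∈ (b.map (e2 q).toEmbedding).map (j q) ↔ (e2 q).symm z ∈ b := by
    intro q z b
    rw [Finset.mem_map' (j q), Finset.mem_map_equiv]
  have mem_small_not : ∀ (q : G ⧸ N) (b : Finset (Fin (Nat.card N + 1))) (u : G),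
      QuotientAddGroup.mk u ≠ q → (some u : Option G) ∉ (b.map (e2 q).toEmbedding).map (j q) := by
    intro q b u hq hmem
    obtain ⟨z, hz, hzx⟩ := Finset.mem_map.mp hmem
    obtain ⟨w, rfl, hw⟩ := Option.map_eq_some_iff.mp hzx
    exact hq (hw ▸ w.2)
  -- small block counts
  have small_lam : ∀ (q : G ⧸ N) (zx zy : Option {x : G // (QuotientAddGroup.mk x : G ⧸ N) = q}),
      zx ≠ zy →
      Multiset.countP (fun b => j q zx ∈ b ∧ j q zy ∈ b) (smallB q) = lam := by
    intro q zx zy hne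
    have hne' : (e2 q).symm zx ≠ (e2 q).symm zy := fun hc => hne (by simpa using congrArg (e2 q) hc)
    have h2 := h0.2 _ _ hne'
    rw [Multiset.countP_eq_card_filter] at h2
    rw [show smallB q = 𝒜0.map fun b => (b.map (e2 q).toEmbedding).map (j q) from rfl,
      Multiset.countP_map, ← h2]
    congr 1
    apply Multiset.filter_congr
    intro b _
    simp [mem_small]
  have small_zero : ∀ (q : G ⧸ N) (u : G), QuotientAddGroup.mk u ≠ q → ∀ (x : Option G),
      Multiset.countP (fun b => (some u : Option G) ∈ b ∧ x ∈ b) (smallB q) = 0 ∧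
      Multiset.countP (fun b => x ∈ b ∧ (some u : Option G) ∈ b) (smallB q) = 0 := by
    intro q u hq x
    constructor <;>
    · rw [Multiset.countP_eq_zero]
      intro b hb
      obtain ⟨c, hc, rfl⟩ := Multiset.mem_map.mp hb
      intro hcontra
      exact mem_small_not q c u hq (by tauto)
  -- translate counts
  have count_trs : ∀ u v : G, u ≠ v →
      Multiset.countP (fun b => (some u : Option G) ∈ b ∧ (some v : Option G) ∈ b) trs
        = Multiset.count (u - v) (∑ i, finsetDiffs (B i)) := by
    intro u v huv
    rw [show trs = ∑ i : Fin r, (Finset.univ.val : Multiset G).map (T i) from rfl,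
      my_countP_sum, Multiset.count_sum']
    refine Finset.sum_congr rfl fun i _ => ?_
    rw [Multiset.countP_map]
    show _ = Multiset.count (u - v) (finsetDiffs (B i))
    rw [finsetDiffs, Multiset.count_map]
    rw [← Finset.filter_val, ← Finset.filter_val]
    show (Finset.filter _ Finset.univ).card = (Finset.filter _ ((B i).offDiag)).card
    refine Finset.card_nbij' (fun g => (u - g, v - g)) (fun p => u - p.1) ?_ ?_ ?_ ?_
    · intro g hg
      rw [Finset.mem_coe, Finset.mem_filter] at hg ⊢
      have h1 := (memT i g u).mp hg.2.1
      have h2 := (memT i g v).mp hg.2.2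
      refine ⟨Finset.mem_offDiag.mpr ⟨h1, h2, ?_⟩, by show u - v = (u - g) - (v - g); abel⟩
      intro hc
      exact huv (by have := congrArg (· + g) hc; simpa using this)
    · intro p hp
      rw [Finset.mem_coe, Finset.mem_filter] at hp
      obtain ⟨hoff, heq⟩ := hp
      obtain ⟨h1, h2, hne⟩ := Finset.mem_offDiag.mp hoff
      rw [Finset.mem_coe, Finset.mem_filter]
      refine ⟨Finset.mem_univ _, (memT _ _ _).mpr (by simpa using h1), (memT _ _ _).mpr ?_⟩
      have : v - (u - p.1) = p.2 := by
        have : p.2 = p.1 - (u - v) := by rw [heq]; abel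
        rw [this]; abel
      rwa [this]
    · intro g _
      show u - (u - g) = g
      abel
    · intro p hp
      rw [Finset.mem_coe, Finset.mem_filter] at hp
      have heq := hp.2
      have h2 : v - (u - p.1) = p.2 := by
        have : p.2 = p.1 - (u - v) := by rw [heq]; abel
        rw [this]; abel
      have h1 : u - (u - p.1) = p.1 := by abel
      ext <;> simp [h1, h2]
  have trs_none : ∀ x : Option G,
      Multiset.countP (fun b => (none : Option G) ∈ b ∧ x ∈ b) trs = 0 ∧
      Multiset.countP (fun b => x ∈ b ∧ (none : Option G) ∈ b) trs = 0 := by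
    intro x
    constructor <;>
    · rw [Multiset.countP_eq_zero]
      intro b hb
      rw [show trs = ∑ i : Fin r, (Finset.univ.val : Multiset G).map (T i) from rfl] at hb
      rw [Multiset.mem_sum] at hb
      obtain ⟨i, -, hb⟩ := hb
      obtain ⟨g, -, rfl⟩ := Multiset.mem_map.mp hb
      intro hcontra
      exact noneT i g (by tauto)
  refine ⟨trs + ∑ q : G ⧸ N, smallB q, ?_, ?_⟩
  · intro b hb
    rw [Multiset.mem_add] at hb
    rcases hb with hb | hb
    · rw [show trs = ∑ i : Fin r, (Finset.univ.val : Multiset G).map (T i) from rfl,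
        Multiset.mem_sum] at hb
      obtain ⟨i, -, hb⟩ := hb
      obtain ⟨g, -, rfl⟩ := Multiset.mem_map.mp hb
      rw [show T i g = (B i).map _ from rfl, Finset.card_map]
      exact hcard i
    · rw [Multiset.mem_sum] at hb
      obtain ⟨q, -, hb⟩ := hb
      obtain ⟨c, hc, rfl⟩ := Multiset.mem_map.mp hb
      rw [Finset.card_map, Finset.card_map]
      exact h0.1 c hc
  · intro x y hxy
    rw [Multiset.countP_add, my_countP_sum (s := (Finset.univ : Finset (G ⧸ N))) (f := smallB)]
    match x, y with
    | none, none => exact absurd rfl hxy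
    | some u, none =>
      have h1 := (trs_none (some u)).2
      have h2 : ∑ q : G ⧸ N, Multiset.countP
          (fun b => (some u : Option G) ∈ b ∧ (none : Option G) ∈ b) (smallB q) = lam := by
        rw [Finset.sum_eq_single (QuotientAddGroup.mk u)]
        · exact small_lam _ (some ⟨u, rfl⟩) none (by simp)
        · intro q _ hq
          exact ((small_zero q u (Ne.symm hq) none).1)
        · intro h; exact absurd (Finset.mem_univ _) h
      rw [h1, h2, Nat.zero_add]
    | none, some u =>
      have h1 := (trs_none (some u)).1
      have h2 : ∑ q : G ⧸ N, Multiset.countP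
          (fun b => (none : Option G) ∈ b ∧ (some u : Option G) ∈ b) (smallB q) = lam := by
        rw [Finset.sum_eq_single (QuotientAddGroup.mk u)]
        · exact small_lam _ none (some ⟨u, rfl⟩) (by simp)
        · intro q _ hq
          exact ((small_zero q u (Ne.symm hq) none).2)
        · intro h; exact absurd (Finset.mem_univ _) h
      rw [h1, h2, Nat.zero_add]
    | some u, some v =>
      have huv : u ≠ v := by simpa using hxy
      rw [count_trs u v huv, hDF]
      by_cases hN : u - v ∈ N
      · have hq : QuotientAddGroup.mk v = (QuotientAddGroup.mk u : G ⧸ N) :=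
          (QuotientAddGroup.eq_iff_sub_mem.mpr hN).symm
        have h2 : ∑ q : G ⧸ N, Multiset.countP
            (fun b => (some u : Option G) ∈ b ∧ (some v : Option G) ∈ b) (smallB q) = lam := by
          rw [Finset.sum_eq_single (QuotientAddGroup.mk u)]
          · exact small_lam _ (some ⟨u, rfl⟩) (some ⟨v, hq⟩) (by simp [huv])
          · intro q _ hqq
            exact ((small_zero q u (Ne.symm hqq) (some v)).1)
          · intro h; exact absurd (Finset.mem_univ _) h
        rw [if_pos hN, h2, Nat.zero_add]
      · have h2 : ∑ q : G ⧸ N, Multiset.countP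
            (fun b => (some u : Option G) ∈ b ∧ (some v : Option G) ∈ b) (smallB q) = 0 := by
          refine Finset.sum_eq_zero fun q _ => ?_
          by_cases hqu : QuotientAddGroup.mk u = q
          · have hqv : QuotientAddGroup.mk v ≠ q := by
              intro hc
              exact hN (QuotientAddGroup.eq_iff_sub_mem.mp (hqu.trans hc.symm))
            exact (small_zero q v hqv (some u)).2
          · exact (small_zero q u hqu (some v)).1
        rw [if_neg hN, h2, Nat.add_zero]

/-- If there exist a `(G,N,k,λ)` relative difference family and a `2-(|N|+1,k,λ)` design,
then there exists a `2-(|G|+1,k,λ)` design. -/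
theorem paper_stmt_11 {G : Type*} [AddCommGroup G] [Fintype G] [DecidableEq G]
    (N : AddSubgroup G) {r k lam : ℕ}
    (B : Fin r → Finset G) (hcard : ∀ i, (B i).card = k)
    (hDF : ∀ g : G, Multiset.count g (∑ i, finsetDiffs (B i)) = if g ∈ N then 0 else lam)
    (hsmall : ∃ 𝒜 : Multiset (Finset (Fin (Nat.card N + 1))), Is2Design 𝒜 k lam) :
    ∃ 𝒜 : Multiset (Finset (Fin (Fintype.card G + 1))), Is2Design 𝒜 k lam := by
  obtain ⟨𝒜0, h0⟩ := hsmall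
  obtain ⟨𝒜1, h1⟩ := key_step N B hcard hDF 𝒜0 h0
  have e : Option G ≃ Fin (Fintype.card G + 1) :=
    Fintype.equivFinOfCardEq (by simp)
  exact ⟨𝒜1.map (Finset.map e.toEmbedding), my_design_map e h1⟩
end

section
/- Let $p \equiv 1 \pmod 4$ be a prime power, $\delta$ a generator of the group of nonzero squares of $\mathbb{F}_p$, and consider the first-type Paley difference multiset written as the sequence $(0, \delta, \delta, -\delta, -\delta, \delta^2, \delta^2, -\delta^2, -\delta^2, \ldots, \delta^{(p-1)/4}, \delta^{(p-1)/4}, -\delta^{(p-1)/4}, -\delta^{(p-1)/4})$. Then for each nonzero $h \in \mathbb{F}_p$, the multiset of symbolic second-coordinate differences $T_h$ (arising when the second coordinates are $(0, y_1,-y_1, \xi y_1, -\xi y_1, \ldots, y_{(p-1)/4}, -y_{(p-1)/4}, \xi y_{(p-1)/4}, -\xi y_{(p-1)/4})$ with $\xi$ a primitive $4$th root of unity) has the form $\{1,-1,\xi,-\xi\} \cdot D_h$ for a multiset $D_h$ of size $(p-1)/4$, and $D_h = D_{-h}$. -/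
open scoped Classical

/-- The multiset `[φ a - φ b : f a - f b = h, a ≠ b]` of second-coordinate differences
taken over ordered pairs of distinct positions whose first-coordinate difference is `h`. -/
def Tdiff {ι Fp Fq : Type*} [Fintype ι] [DecidableEq ι] [AddCommGroup Fp] [DecidableEq Fp]
    [AddCommGroup Fq] (f : ι → Fp) (φ : ι → Fq) (h : Fp) : Multiset Fq :=
  ((Finset.univ.offDiag : Finset (ι × ι)).filter fun p => f p.1 - f p.2 = h).val.map
    fun p => φ p.1 - φ p.2

/-- The first-type Paley sequence
`(0, δ, δ, -δ, -δ, δ², δ², -δ², -δ², …, δ^m, δ^m, -δ^m, -δ^m)` where `m = (p-1)/4`: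
position `none` carries `0`, and position `(i,t)` carries `±δ^(i+1)`. -/
def paley1fst {Fp : Type*} [Field Fp] (δ : Fp) (m : ℕ) : Option (Fin m × Fin 4) → Fp
  | none => 0
  | some (i, t) => (if (t : ℕ) < 2 then 1 else -1) * δ ^ ((i : ℕ) + 1)

/-- The corresponding second coordinates
`(0, y₁, -y₁, ξy₁, -ξy₁, …, y_m, -y_m, ξy_m, -ξy_m)`. -/
def paley1snd {Fq : Type*} [Field Fq] (ξ : Fq) {m : ℕ} (y : Fin m → Fq) :
    Option (Fin m × Fin 4) → Fq
  | none => 0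
  | some (i, t) =>
      (if (t : ℕ) % 2 = 0 then 1 else -1) * (if (t : ℕ) < 2 then 1 else ξ) * y i

lemma Tdiff_eq_map_of_equiv {ι Fp Fq : Type*} [Fintype ι] [DecidableEq ι] [AddCommGroup Fp]
    [DecidableEq Fp] [CommRing Fq]
    (f : ι → Fp) (φ : ι → Fq) (h h' : Fp) (c : Fq) (E : (ι × ι) ≃ (ι × ι))
    (hne : ∀ p : ι × ι, (E p).1 ≠ (E p).2 ↔ p.1 ≠ p.2)
    (hf : ∀ p : ι × ι, f (E p).1 - f (E p).2 = h' ↔ f p.1 - f p.2 = h)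
    (hφ : ∀ p : ι × ι, φ (E p).1 - φ (E p).2 = c * (φ p.1 - φ p.2)) :
    Tdiff f φ h' = (Tdiff f φ h).map (fun z => c * z) := by
  classical
  have hS : ((Finset.univ.offDiag : Finset (ι × ι)).filter fun p => f p.1 - f p.2 = h).map
        E.toEmbedding
      = ((Finset.univ.offDiag : Finset (ι × ι)).filter fun p => f p.1 - f p.2 = h') := by
    ext x
    simp only [Finset.mem_map, Finset.mem_filter, Finset.mem_offDiag, Finset.mem_univ, true_and,
      Equiv.coe_toEmbedding]
    constructor
    · rintro ⟨p, ⟨hp1, hp2⟩, rfl⟩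
      exact ⟨(hne p).2 hp1, (hf p).2 hp2⟩
    · rintro ⟨h1, h2⟩
      refine ⟨E.symm x, ⟨?_, ?_⟩, E.apply_symm_apply x⟩
      · have := hne (E.symm x); rw [E.apply_symm_apply] at this; exact this.1 h1
      · have := hf (E.symm x); rw [E.apply_symm_apply] at this; exact this.1 h2
  unfold Tdiff
  rw [← hS, Finset.map_val, Multiset.map_map, Multiset.map_map]
  exact Multiset.map_congr rfl (fun p _ => by simpa using hφ p)

lemma orbit_decomp {α Fq : Type*} [DecidableEq α] [CommRing Fq]
    (σ : α ≃ α) (c : Fq) (g : α → Fq)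
    (hσ4 : ∀ a, σ (σ (σ (σ a))) = a) :
    ∀ S : Finset α, (∀ a ∈ S, σ a ∈ S) → (∀ a ∈ S, σ (σ a) ≠ a) →
      (∀ a ∈ S, g (σ a) = c * g a) →
      ∃ D : Multiset Fq,
        S.val.map g = ({1, c, c ^ 2, c ^ 3} : Multiset Fq).bind (fun e => D.map (fun z => e * z))
          ∧ S.card = 4 * Multiset.card D := by
  intro S
  induction S using Finset.strongInductionOn with
  | _ S ih =>
    intro hcl hfp hg
    rcases S.eq_empty_or_nonempty with rfl | ⟨a, ha⟩
    · exact ⟨0, by simp, by simp⟩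
    have ha1 : σ a ∈ S := hcl a ha
    have ha2 : σ (σ a) ∈ S := hcl _ ha1
    have ha3 : σ (σ (σ a)) ∈ S := hcl _ ha2
    have hne02 : σ (σ a) ≠ a := hfp a ha
    have hne13 : σ (σ (σ a)) ≠ σ a := hfp (σ a) ha1
    have hne01 : σ a ≠ a := by
      intro e; apply hne02; rw [e, e]
    have hne03 : σ (σ (σ a)) ≠ a := by
      intro e
      apply hne01
      have := hσ4 a
      rw [e] at this
      exact this
    have hne12 : σ (σ a) ≠ σ a := fun e => hne01 (σ.injective e)
    have hne23 : σ (σ (σ a)) ≠ σ (σ a) := fun e => hne12 (σ.injective e)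
    have hnodup : (a ::ₘ σ a ::ₘ σ (σ a) ::ₘ σ (σ (σ a)) ::ₘ 0).Nodup := by
      simp only [Multiset.nodup_cons, Multiset.mem_cons, Multiset.notMem_zero, or_false,
        Multiset.nodup_zero, and_true]
      push_neg
      exact ⟨⟨fun e => hne01 e.symm, fun e => hne02 e.symm, fun e => hne03 e.symm⟩,
        ⟨fun e => hne12 e.symm, fun e => hne13 e.symm⟩, fun e => hne23 e.symm, trivial⟩
    set O : Finset α := ⟨a ::ₘ σ a ::ₘ σ (σ a) ::ₘ σ (σ (σ a)) ::ₘ 0, hnodup⟩ with hO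
    have hmemO : ∀ x, x ∈ O ↔ (x = a ∨ x = σ a ∨ x = σ (σ a) ∨ x = σ (σ (σ a))) := by
      intro x
      simp [hO, Finset.mem_def]
    have hOsub : O ⊆ S := by
      intro x hx
      rcases (hmemO x).1 hx with rfl | rfl | rfl | rfl <;> assumption
    have hOval : O.val = a ::ₘ σ a ::ₘ σ (σ a) ::ₘ σ (σ (σ a)) ::ₘ 0 := rfl
    have hOcard : O.card = 4 := rfl
    set S' := S \ O with hS'
    have hS'sub : S' ⊂ S := Finset.sdiff_ssubset hOsub ⟨a, by simp [hmemO]⟩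
    have hmemS' : ∀ x, x ∈ S' ↔ x ∈ S ∧ ¬ x ∈ O := fun x => Finset.mem_sdiff
    have hcl' : ∀ b ∈ S', σ b ∈ S' := by
      intro b hb
      rcases (hmemS' b).1 hb with ⟨hbS, hbO⟩
      refine (hmemS' _).2 ⟨hcl b hbS, ?_⟩
      intro hσbO
      apply hbO
      rcases (hmemO _).1 hσbO with e | e | e | e
      · refine (hmemO b).2 (Or.inr (Or.inr (Or.inr ?_)))
        apply σ.injective; rw [hσ4, e]
      · exact (hmemO b).2 (Or.inl (σ.injective e))
      · exact (hmemO b).2 (Or.inr (Or.inl (σ.injective e)))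
      · exact (hmemO b).2 (Or.inr (Or.inr (Or.inl (σ.injective e))))
    obtain ⟨D', hD1, hD2⟩ := ih S' hS'sub hcl'
      (fun b hb => hfp b (Finset.mem_sdiff.1 hb).1)
      (fun b hb => hg b (Finset.mem_sdiff.1 hb).1)
    have e1 : g (σ a) = c * g a := hg a ha
    have e2 : g (σ (σ a)) = c ^ 2 * g a := by rw [hg _ ha1, e1]; ring
    have e3 : g (σ (σ (σ a))) = c ^ 3 * g a := by rw [hg _ ha2, e2]; ring
    refine ⟨g a ::ₘ D', ?_, ?_⟩
    · have hval : S.val = O.val + S'.val := by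
        have hle : O.val ≤ S.val := Finset.val_le_iff.2 hOsub
        rw [hS', Finset.sdiff_val, add_comm, tsub_add_cancel_of_le hle]
      have hbind : (({1, c, c ^ 2, c ^ 3} : Multiset Fq).bind
          (fun e => (g a ::ₘ D').map (fun z => e * z)))
          = ({1, c, c ^ 2, c ^ 3} : Multiset Fq).map (fun e => e * g a)
            + ({1, c, c ^ 2, c ^ 3} : Multiset Fq).bind (fun e => D'.map (fun z => e * z)) := by
        rw [show (fun e : Fq => (g a ::ₘ D').map (fun z => e * z))
            = fun e => ({e * g a} : Multiset Fq) + D'.map (fun z => e * z) from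
          funext fun e => by rw [Multiset.map_cons, Multiset.singleton_add],
          Multiset.bind_add, Multiset.bind_singleton]
      rw [hval, Multiset.map_add, hD1, hOval, hbind]
      congr 1
      simp only [Multiset.insert_eq_cons, Multiset.map_cons, Multiset.map_singleton,
        Multiset.map_zero, e1, e2, e3, one_mul, Multiset.cons_zero]
    · have hc1 : S'.card = S.card - O.card := Finset.card_sdiff_of_subset hOsub
      have hc2 : O.card ≤ S.card := Finset.card_le_card hOsub
      have hc3 : O.card = 4 := hOcard
      rw [Multiset.card_cons]
      omega

lemma Tdiff_orbit {ι Fp Fq : Type*} [Fintype ι] [DecidableEq ι] [AddCommGroup Fp]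
    [DecidableEq Fp] [CommRing Fq]
    (f : ι → Fp) (φ : ι → Fq) (h : Fp) (c0 : Fq) (e : ι ≃ ι)
    (he4 : ∀ a, e (e (e (e a))) = a)
    (he2 : ∀ a b : ι, e (e a) = a → e (e b) = b → a = b)
    (hf : ∀ a, f (e a) = - f a)
    (hφ : ∀ a, φ (e a) = c0 * φ a) :
    ∃ D : Multiset Fq,
      Tdiff f φ h = ({1, -c0, (-c0) ^ 2, (-c0) ^ 3} : Multiset Fq).bind
        (fun x => D.map (fun z => x * z))
      ∧ Multiset.card (Tdiff f φ h) = 4 * Multiset.card D := by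
  classical
  set σ : (ι × ι) ≃ (ι × ι) :=
    (Equiv.prodComm ι ι).trans (Equiv.prodCongr e e) with hσdef
  have hσ : ∀ p : ι × ι, σ p = (e p.2, e p.1) := fun p => rfl
  have hσ2 : ∀ p : ι × ι, σ (σ p) = (e (e p.1), e (e p.2)) := fun p => rfl
  have hσ4 : ∀ p : ι × ι, σ (σ (σ (σ p))) = p := by
    intro p
    have : σ (σ (σ (σ p))) = (e (e (e (e p.1))), e (e (e (e p.2)))) := rfl
    rw [this, he4, he4]
  set S := ((Finset.univ.offDiag : Finset (ι × ι)).filter fun p => f p.1 - f p.2 = h) with hSdef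
  have hmemS : ∀ p : ι × ι, p ∈ S ↔ (p.1 ≠ p.2 ∧ f p.1 - f p.2 = h) := by
    intro p
    simp [hSdef, Finset.mem_offDiag]
  have hcl : ∀ p ∈ S, σ p ∈ S := by
    intro p hp
    rcases (hmemS p).1 hp with ⟨h1, h2⟩
    refine (hmemS (σ p)).2 ⟨?_, ?_⟩
    · rw [hσ]
      exact fun hcon => h1 (e.injective hcon).symm
    · rw [hσ]
      show f (e p.2) - f (e p.1) = h
      rw [hf, hf, neg_sub_neg, h2]
  have hfp : ∀ p ∈ S, σ (σ p) ≠ p := by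
    intro p hp hcon
    rcases (hmemS p).1 hp with ⟨h1, _⟩
    rw [hσ2] at hcon
    have e1 : e (e p.1) = p.1 := congrArg Prod.fst hcon
    have e2 : e (e p.2) = p.2 := congrArg Prod.snd hcon
    exact h1 (he2 _ _ e1 e2)
  have hg : ∀ p ∈ S, (fun q : ι × ι => φ q.1 - φ q.2) (σ p)
      = (-c0) * (fun q : ι × ι => φ q.1 - φ q.2) p := by
    intro p _
    rw [hσ]
    show φ (e p.2) - φ (e p.1) = -c0 * (φ p.1 - φ p.2)
    rw [hφ, hφ]; ring
  obtain ⟨D, hD1, hD2⟩ := orbit_decomp σ (-c0) (fun q : ι × ι => φ q.1 - φ q.2) hσ4 S hcl hfp hg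
  refine ⟨D, hD1, ?_⟩
  unfold S at hD2
  unfold Tdiff
  rw [Multiset.card_map]
  exact hD2

lemma Tdiff_card {ι Fp Fq : Type*} [Fintype ι] [DecidableEq ι] [Field Fp] [Fintype Fp]
    [DecidableEq Fp] [AddCommGroup Fq]
    (f : ι → Fp) (φ : ι → Fq) (ψ : ι → Fp)
    (hψinj : Function.Injective ψ) (hψsurj : Function.Surjective ψ)
    (hψ : ∀ a, f a = ψ a ^ 2) (h : Fp) (hh : h ≠ 0) (h2 : (2 : Fp) ≠ 0) :
    Multiset.card (Tdiff f φ h) = Fintype.card Fp - 1 := by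
  classical
  unfold Tdiff
  rw [Multiset.card_map]
  have step0 : ((Finset.univ.offDiag : Finset (ι × ι)).filter fun p => f p.1 - f p.2 = h)
      = (Finset.univ : Finset (ι × ι)).filter (fun p => f p.1 - f p.2 = h) := by
    ext p
    simp only [Finset.mem_filter, Finset.mem_offDiag, Finset.mem_univ, true_and]
    constructor
    · rintro ⟨h1, h2'⟩; exact h2'
    · intro hd
      refine ⟨?_, hd⟩
      intro hcon
      rw [hcon, sub_self] at hd
      exact hh hd.symm
  have step1 : ((Finset.univ : Finset (ι × ι)).filter (fun p => f p.1 - f p.2 = h)).card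
      = ((Finset.univ : Finset (Fp × Fp)).filter (fun q => q.1 ^ 2 - q.2 ^ 2 = h)).card := by
    apply Finset.card_nbij (fun p => (ψ p.1, ψ p.2))
    · intro p hp
      rw [Finset.mem_coe, Finset.mem_filter] at hp ⊢
      refine ⟨Finset.mem_univ _, ?_⟩
      rw [← hψ, ← hψ]
      exact hp.2
    · intro p _ q _ hpq
      simp only [Prod.mk.injEq] at hpq
      exact Prod.ext (hψinj hpq.1) (hψinj hpq.2)
    · intro q hq
      simp only [Finset.coe_filter, Finset.mem_univ, true_and, Set.mem_setOf_eq,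
        Set.mem_image, Finset.mem_coe] at hq ⊢
      obtain ⟨u, hu⟩ := hψsurj q.1
      obtain ⟨v, hv⟩ := hψsurj q.2
      refine ⟨(u, v), ?_, by rw [hu, hv]⟩
      rw [hψ, hψ, hu, hv]
      exact hq
  have step2 : ((Finset.univ : Finset (Fp × Fp)).filter (fun q => q.1 ^ 2 - q.2 ^ 2 = h)).card
      = ((Finset.univ : Finset (Fp × Fp)).filter (fun q => q.1 * q.2 = h)).card := by
    apply Finset.card_nbij' (fun q => (q.1 + q.2, q.1 - q.2))
        (fun q => ((q.1 + q.2) / 2, (q.1 - q.2) / 2))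
    · intro q hq
      rw [Finset.mem_coe, Finset.mem_filter] at hq ⊢
      refine ⟨Finset.mem_univ _, ?_⟩
      rw [← hq.2]; ring
    · intro q hq
      rw [Finset.mem_coe, Finset.mem_filter] at hq ⊢
      refine ⟨Finset.mem_univ _, ?_⟩
      field_simp
      rw [← hq.2]; ring
    · intro q _
      have : ∀ x y : Fp, (x + y + (x - y)) / 2 = x := by intro x y; field_simp; ring
      have h2' : ∀ x y : Fp, (x + y - (x - y)) / 2 = y := by intro x y; field_simp; ring
      exact Prod.ext (this q.1 q.2) (h2' q.1 q.2)
    · intro q _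
      have e1 : (q.1 + q.2) / 2 + (q.1 - q.2) / 2 = q.1 := by field_simp; ring
      have e2 : (q.1 + q.2) / 2 - (q.1 - q.2) / 2 = q.2 := by field_simp; ring
      exact Prod.ext e1 e2
  have step3 : ((Finset.univ : Finset (Fp × Fp)).filter (fun q => q.1 * q.2 = h)).card
      = Fintype.card Fp - 1 := by
    have : ((Finset.univ : Finset (Fp × Fp)).filter (fun q => q.1 * q.2 = h)).card
        = ((Finset.univ : Finset Fp).erase 0).card := by
      apply Finset.card_nbij' (fun q => q.1) (fun s => (s, s⁻¹ * h))
      · intro q hq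
        rw [Finset.mem_coe, Finset.mem_filter] at hq
        rw [Finset.mem_coe, Finset.mem_erase]
        refine ⟨?_, Finset.mem_univ _⟩
        intro hcon
        rw [show q.1 = 0 from hcon, zero_mul] at hq
        exact hh hq.2.symm
      · intro s hs
        rw [Finset.mem_coe, Finset.mem_erase] at hs
        rw [Finset.mem_coe, Finset.mem_filter]
        refine ⟨Finset.mem_univ _, ?_⟩
        field_simp
        exact div_self hs.1
      · intro q hq
        rw [Finset.mem_coe, Finset.mem_filter] at hq
        have hq1 : q.1 ≠ 0 := by
          intro hcon
          rw [hcon, zero_mul] at hq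
          exact hh hq.2.symm
        refine Prod.ext rfl ?_
        show q.1⁻¹ * h = q.2
        rw [← hq.2]
        field_simp
      · intro s _
        rfl
    rw [this, Finset.card_erase_of_mem (Finset.mem_univ _), Finset.card_univ]
  rw [step0]
  rw [show Multiset.card (Finset.filter (fun p : ι × ι => f p.1 - f p.2 = h) Finset.univ).val
    = (Finset.filter (fun p : ι × ι => f p.1 - f p.2 = h) Finset.univ).card from rfl]
  rw [step1, step2, step3]

def rho4 : Fin 4 ≃ Fin 4 := ⟨![1, 0, 3, 2], ![1, 0, 3, 2], by decide, by decide⟩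

def pi4 : Fin 4 ≃ Fin 4 := ⟨![2, 3, 1, 0], ![3, 2, 0, 1], by decide, by decide⟩

def rhoE (m : ℕ) : Option (Fin m × Fin 4) ≃ Option (Fin m × Fin 4) :=
  Equiv.optionCongr ((Equiv.refl (Fin m)).prodCongr rho4)

def piE (m : ℕ) : Option (Fin m × Fin 4) ≃ Option (Fin m × Fin 4) :=
  Equiv.optionCongr ((Equiv.refl (Fin m)).prodCongr pi4)

lemma rhoE_some (m : ℕ) (i : Fin m) (t : Fin 4) :
    rhoE m (some (i, t)) = some (i, rho4 t) := rfl

lemma piE_some (m : ℕ) (i : Fin m) (t : Fin 4) :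
    piE m (some (i, t)) = some (i, pi4 t) := rfl


lemma delta_struct {Fp : Type*} [Field Fp] [Fintype Fp] [DecidableEq Fp] (m : ℕ)
    (hm : Fintype.card Fp = 4 * m + 1)
    (δ : Fp) (hδ : ∀ x : Fp, (x ≠ 0 ∧ IsSquare x) ↔ ∃ i : ℕ, δ ^ i = x) :
    (2 : Fp) ≠ 0 ∧ 1 ≤ m ∧ δ ≠ 0 ∧ δ ^ m = -1 ∧
      (∀ i j : ℕ, i < 2 * m → j < 2 * m → δ ^ i = δ ^ j → i = j) := by
  classical
  have hm1 : 1 ≤ m := by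
    have := Fintype.one_lt_card (α := Fp)
    omega
  have h2 : (2 : Fp) ≠ 0 := by
    intro h20
    have hc2 : ringChar Fp = 2 :=
      ((Nat.dvd_prime Nat.prime_two).mp (ringChar.dvd h20)).resolve_left CharP.ringChar_ne_one
    have := FiniteField.even_card_iff_char_two.mp hc2
    omega
  have hδ0 : δ ≠ 0 := ((hδ δ).mpr ⟨1, pow_one δ⟩).1
  set u : Fpˣ := Units.mk0 δ hδ0 with hu
  set n : ℕ := orderOf u with hn
  have hn0 : 0 < n := orderOf_pos u
  have hδn : δ ^ n = 1 := by
    have h := pow_orderOf_eq_one u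
    have : ((u ^ n : Fpˣ) : Fp) = ((1 : Fpˣ) : Fp) := by rw [h]
    rw [Units.val_pow_eq_pow_val, Units.val_one] at this; exact this
  have hpow_mod : ∀ i : ℕ, δ ^ i = δ ^ (i % n) := by
    intro i
    conv_lhs => rw [← Nat.div_add_mod i n]
    rw [pow_add, pow_mul, hδn, one_pow, one_mul]
  have hinj : ∀ i j : ℕ, i < n → j < n → δ ^ i = δ ^ j → i = j := by
    intro i j hi hj hij
    have huij : u ^ i = u ^ j := by
      apply Units.ext
      rw [Units.val_pow_eq_pow_val, Units.val_pow_eq_pow_val]; exact hij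
    exact pow_injOn_Iio_orderOf (Set.mem_Iio.mpr hi) (Set.mem_Iio.mpr hj) huij
  set Q : Finset Fp := Finset.univ.filter (fun x : Fp => x ≠ 0 ∧ IsSquare x) with hQ
  have hQcard : Q.card = 2 * m := by
    set N : Finset Fp := Finset.univ.filter (fun x : Fp => x ≠ 0) with hNdef
    have hN : N.card = 4 * m := by
      rw [hNdef, Finset.filter_ne', Finset.card_erase_of_mem (Finset.mem_univ _),
        Finset.card_univ, hm]
      omega
    have hmaps : ∀ x ∈ N, x ^ 2 ∈ Q := by
      intro x hx
      rw [hNdef, Finset.mem_filter] at hx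
      rw [hQ, Finset.mem_filter]
      exact ⟨Finset.mem_univ _, pow_ne_zero 2 hx.2, ⟨x, by ring⟩⟩
    have hsum := Finset.card_eq_sum_card_fiberwise hmaps
    have hfib : ∀ q ∈ Q, (N.filter (fun x => x ^ 2 = q)).card = 2 := by
      intro q hq
      rw [hQ, Finset.mem_filter] at hq
      obtain ⟨-, hq0, u0, hu0⟩ := hq
      have hu0ne : u0 ≠ 0 := by
        intro e; rw [e, mul_zero] at hu0; exact hq0 hu0
      have hset : N.filter (fun x => x ^ 2 = q) = {u0, -u0} := by
        ext x
        rw [Finset.mem_filter, hNdef, Finset.mem_filter]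
        simp only [Finset.mem_univ, true_and, Finset.mem_insert, Finset.mem_singleton]
        constructor
        · rintro ⟨-, hx2⟩
          have hfac : (x - u0) * (x + u0) = 0 := by
            rw [hu0] at hx2; linear_combination hx2
          rcases mul_eq_zero.1 hfac with hf | hf
          · exact Or.inl (sub_eq_zero.1 hf)
          · exact Or.inr (eq_neg_of_add_eq_zero_left hf)
        · rintro (rfl | rfl)
          · exact ⟨hu0ne, by rw [hu0]; ring⟩
          · exact ⟨neg_ne_zero.2 hu0ne, by rw [hu0]; ring⟩
      rw [hset]
      rw [Finset.card_insert_of_notMem, Finset.card_singleton]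
      simp only [Finset.mem_singleton]
      intro e
      apply hu0ne
      have h2u : (2 : Fp) * u0 = 0 := by linear_combination e
      rcases mul_eq_zero.1 h2u with hf | hf
      · exact absurd hf h2
      · exact hf
    rw [Finset.sum_congr rfl hfib, Finset.sum_const, smul_eq_mul] at hsum
    omega
  have himg : Q = (Finset.range n).image (fun i => δ ^ i) := by
    ext x
    rw [hQ, Finset.mem_filter, Finset.mem_image]
    constructor
    · rintro ⟨-, hx⟩
      obtain ⟨i, hi⟩ := (hδ x).1 hx
      exact ⟨i % n, Finset.mem_range.2 (Nat.mod_lt i hn0), by rw [← hpow_mod]; exact hi⟩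
    · rintro ⟨i, -, rfl⟩
      exact ⟨Finset.mem_univ _, (hδ _).2 ⟨i, rfl⟩⟩
  have hQn : Q.card = n := by
    rw [himg, Finset.card_image_of_injOn, Finset.card_range]
    intro i hi j hj hij
    exact hinj i j (Finset.mem_range.1 hi) (Finset.mem_range.1 hj) hij
  have hn2m : n = 2 * m := by omega
  have hδ2m : δ ^ (2 * m) = 1 := by rw [← hn2m]; exact hδn
  have hδm : δ ^ m = -1 := by
    have hsq : δ ^ m * δ ^ m = 1 := by
      rw [← pow_add, show m + m = 2 * m by ring]; exact hδ2m
    rcases mul_self_eq_one_iff.1 hsq with h1 | h1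
    · exfalso
      have := hinj m 0 (by omega) (by omega) (by rw [pow_zero]; exact h1)
      omega
    · exact h1
  refine ⟨h2, hm1, hδ0, hδm, ?_⟩
  intro i j hi hj
  exact hinj i j (by omega) (by omega)

lemma paley1fst_rhoE {Fp : Type*} [Field Fp] (δ : Fp) (m : ℕ) (a : Option (Fin m × Fin 4)) :
    paley1fst δ m (rhoE m a) = paley1fst δ m a := by
  match a with
  | none => rfl
  | some (i, t) =>
    rw [rhoE_some]
    fin_cases t <;> norm_num [paley1fst, rho4, show ((0:Fin 4):ℕ) = 0 from rfl, show ((1:Fin 4):ℕ) = 1 from rfl, show ((2:Fin 4):ℕ) = 2 from rfl, show ((3:Fin 4):ℕ) = 3 from rfl]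

lemma paley1snd_rhoE {Fq : Type*} [Field Fq] (ξ : Fq) {m : ℕ} (y : Fin m → Fq)
    (a : Option (Fin m × Fin 4)) :
    paley1snd ξ y (rhoE m a) = - paley1snd ξ y a := by
  match a with
  | none => simp [paley1snd, rhoE]
  | some (i, t) =>
    rw [rhoE_some]
    fin_cases t <;> norm_num [paley1snd, rho4, show ((0:Fin 4):ℕ) = 0 from rfl, show ((1:Fin 4):ℕ) = 1 from rfl, show ((2:Fin 4):ℕ) = 2 from rfl, show ((3:Fin 4):ℕ) = 3 from rfl]
    all_goals ring

lemma paley1fst_piE {Fp : Type*} [Field Fp] (δ : Fp) (m : ℕ) (a : Option (Fin m × Fin 4)) :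
    paley1fst δ m (piE m a) = - paley1fst δ m a := by
  match a with
  | none => simp [paley1fst, piE]
  | some (i, t) =>
    rw [piE_some]
    fin_cases t <;> norm_num [paley1fst, pi4, show ((0:Fin 4):ℕ) = 0 from rfl, show ((1:Fin 4):ℕ) = 1 from rfl, show ((2:Fin 4):ℕ) = 2 from rfl, show ((3:Fin 4):ℕ) = 3 from rfl]
    all_goals ring

lemma paley1snd_piE {Fq : Type*} [Field Fq] (ξ : Fq) (hξ : ξ ^ 2 = -1) {m : ℕ} (y : Fin m → Fq)
    (a : Option (Fin m × Fin 4)) :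
    paley1snd ξ y (piE m a) = ξ * paley1snd ξ y a := by
  match a with
  | none => simp [paley1snd, piE]
  | some (i, t) =>
    rw [piE_some]
    fin_cases t <;> norm_num [paley1snd, pi4, show ((0:Fin 4):ℕ) = 0 from rfl, show ((1:Fin 4):ℕ) = 1 from rfl, show ((2:Fin 4):ℕ) = 2 from rfl, show ((3:Fin 4):ℕ) = 3 from rfl]
    · linear_combination (-(y i)) * hξ
    · linear_combination (y i) * hξ

lemma piE_sq_fix {m : ℕ} (a : Option (Fin m × Fin 4)) (h : piE m (piE m a) = a) : a = none := by
  match a with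
  | none => rfl
  | some (i, t) =>
    exfalso
    rw [piE_some, piE_some] at h
    simp only [Option.some.injEq, Prod.mk.injEq] at h
    have := h.2
    fin_cases t <;> simp [pi4, show ((0:Fin 4):ℕ) = 0 from rfl, show ((1:Fin 4):ℕ) = 1 from rfl, show ((2:Fin 4):ℕ) = 2 from rfl, show ((3:Fin 4):ℕ) = 3 from rfl] at this

lemma piE_pow4 {m : ℕ} (a : Option (Fin m × Fin 4)) :
    piE m (piE m (piE m (piE m a))) = a := by
  match a with
  | none => rfl
  | some (i, t) =>
    rw [piE_some, piE_some, piE_some, piE_some]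
    congr 1
    refine Prod.ext rfl ?_
    fin_cases t <;> simp [pi4, show ((0:Fin 4):ℕ) = 0 from rfl, show ((1:Fin 4):ℕ) = 1 from rfl, show ((2:Fin 4):ℕ) = 2 from rfl, show ((3:Fin 4):ℕ) = 3 from rfl]

lemma fval_inj {Fp : Type*} [Field Fp] (m : ℕ) (δ : Fp) (hm1 : 1 ≤ m)
    (hδm : δ ^ m = -1)
    (hinj : ∀ i j : ℕ, i < 2 * m → j < 2 * m → δ ^ i = δ ^ j → i = j)
    (i j : ℕ) (hi : i < m) (hj : j < m) (ε ε' : Fp)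
    (hε : ε = 1 ∨ ε = -1) (hε' : ε' = 1 ∨ ε' = -1)
    (heq : ε * δ ^ (i + 1) = ε' * δ ^ (j + 1)) : i = j ∧ ε = ε' := by
  have hδ2m : δ ^ (2 * m) = 1 := by rw [two_mul, pow_add, hδm]; ring
  have key : ∀ i' j' : ℕ, i' < m → j' < m → δ ^ (i' + 1) = - δ ^ (j' + 1) → False := by
    intro i' j' hi' hj' he
    have h1 : δ ^ (i' + 1) = δ ^ (m + (j' + 1)) := by
      conv_rhs => rw [pow_add, hδm]
      rw [neg_one_mul]; exact he
    by_cases hc : m + (j' + 1) < 2 * m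
    · have := hinj (i' + 1) (m + (j' + 1)) (by omega) hc h1; omega
    · have hc2 : m + (j' + 1) = 2 * m := by omega
      rw [hc2, hδ2m, ← pow_zero δ] at h1
      have := hinj (i' + 1) 0 (by omega) (by omega) h1
      omega
  rcases hε with rfl | rfl <;> rcases hε' with rfl | rfl
  · rw [one_mul, one_mul] at heq
    exact ⟨by have := hinj (i + 1) (j + 1) (by omega) (by omega) heq; omega, rfl⟩
  · exfalso; rw [one_mul, neg_one_mul] at heq; exact key i j hi hj heq
  · exfalso; rw [one_mul, neg_one_mul] at heq; exact key j i hj hi heq.symm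
  · rw [neg_one_mul, neg_one_mul, neg_inj] at heq
    exact ⟨by have := hinj (i + 1) (j + 1) (by omega) (by omega) heq; omega, rfl⟩

/-- Lemma 3.5: for `p ≡ 1 (mod 4)` a prime power, `δ` a generator of the nonzero squares
of `F_p`, `ξ` a primitive 4th root of unity in `F_q` and arbitrary `y₁,…,y_m ∈ F_q^*`
(`m = (p-1)/4`), for each nonzero `h ∈ F_p` the multiset `T_h` of second-coordinate
differences has the form `{1,-1,ξ,-ξ} · D_h` for a multiset `D_h` of size `(p-1)/4`,
and `D_h = D_{-h}`. -/
theorem paper_stmt_15 {Fp Fq : Type*} [Field Fp] [Fintype Fp] [DecidableEq Fp] [Field Fq]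
    (m : ℕ) (hm : Fintype.card Fp = 4 * m + 1)
    (δ : Fp) (hδ : ∀ x : Fp, (x ≠ 0 ∧ IsSquare x) ↔ ∃ i : ℕ, δ ^ i = x)
    (ξ : Fq) (hξ : ξ ^ 2 = -1) (h2 : (2 : Fq) ≠ 0)
    (y : Fin m → Fq) (hy : ∀ i, y i ≠ 0) :
    ∀ h : Fp, h ≠ 0 →
      (∃ Dh : Multiset Fq,
        Tdiff (paley1fst δ m) (paley1snd ξ y) h =
          (({1, -1, ξ, -ξ} : Multiset Fq).bind fun c => Dh.map fun z => c * z) ∧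
        Multiset.card Dh = m) ∧
      Tdiff (paley1fst δ m) (paley1snd ξ y) h =
        Tdiff (paley1fst δ m) (paley1snd ξ y) (-h) := by
  classical
  intro h hh
  set f := paley1fst δ m with hfdef
  set φ := paley1snd ξ y with hφdef
  obtain ⟨h2p, hm1, hδ0, hδm, hinj⟩ := delta_struct m hm δ hδ
  -- square roots
  have hsqrt : ∀ i : Fin m, ∃ r : Fp, δ ^ ((i : ℕ) + 1) = r * r := by
    intro i
    exact ((hδ (δ ^ ((i : ℕ) + 1))).mpr ⟨(i : ℕ) + 1, rfl⟩).2
  choose r hr using hsqrt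
  have hrne : ∀ i, r i ≠ 0 := by
    intro i e
    have : δ ^ ((i : ℕ) + 1) = 0 := by rw [hr i, e, mul_zero]
    exact pow_ne_zero _ hδ0 this
  have hneg1 : IsSquare (-1 : Fp) := by
    apply FiniteField.isSquare_neg_one_iff.2
    rw [hm]; omega
  obtain ⟨t, ht⟩ := hneg1
  have ht0 : t ≠ 0 := by
    intro e
    rw [e, mul_zero] at ht
    exact one_ne_zero (neg_eq_zero.1 ht)
  set ψ : Option (Fin m × Fin 4) → Fp := paley1snd t r with hψdef
  have hψsq : ∀ a, f a = ψ a ^ 2 := by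
    intro a
    match a with
    | none => simp [hfdef, hψdef, paley1fst, paley1snd]
    | some (i, k) =>
      rw [hfdef, hψdef]
      fin_cases k <;> norm_num [paley1fst, paley1snd, show ((0:Fin 4):ℕ) = 0 from rfl, show ((1:Fin 4):ℕ) = 1 from rfl, show ((2:Fin 4):ℕ) = 2 from rfl, show ((3:Fin 4):ℕ) = 3 from rfl]
      · rw [hr i]; ring
      · rw [hr i]; ring
      · linear_combination (-1 : Fp) * (hr i) + (r i * r i) * ht
      · linear_combination (-1 : Fp) * (hr i) + (r i * r i) * ht
  have hψ_ne : ∀ (j : Fin m) (l : Fin 4), ψ (some (j, l)) ≠ 0 := by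
    intro j l
    rw [hψdef]
    fin_cases l <;> norm_num [paley1snd, show ((0:Fin 4):ℕ) = 0 from rfl, show ((1:Fin 4):ℕ) = 1 from rfl, show ((2:Fin 4):ℕ) = 2 from rfl, show ((3:Fin 4):ℕ) = 3 from rfl, hrne j, ht0]
  have hψinj : Function.Injective ψ := by
    intro a b hab
    match a, b with
    | none, none => rfl
    | none, some (j, l) => exact absurd hab.symm (hψ_ne j l)
    | some (j, l), none => exact absurd hab (hψ_ne j l)
    | some (i, k), some (j, l) =>
      have hfe : f (some (i, k)) = f (some (j, l)) := by rw [hψsq, hψsq, hab]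
      rw [hfdef] at hfe
      have hmain := fval_inj m δ hm1 hδm hinj (i : ℕ) (j : ℕ) i.isLt j.isLt
        (if ((k : Fin 4) : ℕ) < 2 then 1 else -1) (if ((l : Fin 4) : ℕ) < 2 then 1 else -1)
        (by split <;> simp) (by split <;> simp) hfe
      obtain ⟨hij, hεε⟩ := hmain
      have hijf : i = j := Fin.ext hij
      subst hijf
      rw [hψdef] at hab
      simp only [paley1snd] at hab
      have hcan : (if ((k : Fin 4) : ℕ) % 2 = 0 then (1 : Fp) else -1)
            * (if ((k : Fin 4) : ℕ) < 2 then 1 else t)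
          = (if ((l : Fin 4) : ℕ) % 2 = 0 then (1 : Fp) else -1)
            * (if ((l : Fin 4) : ℕ) < 2 then 1 else t) :=
        mul_right_cancel₀ (hrne i) hab
      suffices hkl : k = l by rw [hkl]
      fin_cases k <;> fin_cases l <;> norm_num [show ((0:Fin 4):ℕ) = 0 from rfl, show ((1:Fin 4):ℕ) = 1 from rfl, show ((2:Fin 4):ℕ) = 2 from rfl, show ((3:Fin 4):ℕ) = 3 from rfl] at hεε hcan ⊢ <;>
        exfalso <;> apply h2p <;>
          first
            | linear_combination hcan
            | linear_combination (-1 : Fp) * hcan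
            | linear_combination hεε
            | linear_combination (-1 : Fp) * hεε
            | (apply (mul_eq_zero.1 ?_).resolve_right ht0; linear_combination hcan)
            | (apply (mul_eq_zero.1 ?_).resolve_right ht0; linear_combination (-1 : Fp) * hcan)
  have hψsurj : Function.Surjective ψ := by
    have hcards : Fintype.card (Option (Fin m × Fin 4)) = Fintype.card Fp := by
      simp only [Fintype.card_option, Fintype.card_prod, Fintype.card_fin, hm]
      omega
    exact ((Fintype.bijective_iff_injective_and_card ψ).2 ⟨hψinj, hcards⟩).2
  have hcard : Multiset.card (Tdiff f φ h) = 4 * m := by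
    have := Tdiff_card f φ ψ hψinj hψsurj hψsq h hh h2p
    rw [hm] at this
    omega
  constructor
  · -- decomposition
    obtain ⟨D, hD1, hD2⟩ := Tdiff_orbit f φ h ξ (piE m)
      piE_pow4
      (fun a b ha hb => by rw [piE_sq_fix a ha, piE_sq_fix b hb])
      (fun a => paley1fst_piE δ m a)
      (fun a => paley1snd_piE ξ hξ y a)
    have e2 : (-ξ) ^ 2 = -1 := by rw [neg_sq]; exact hξ
    have e3 : (-ξ) ^ 3 = ξ := by
      rw [show (-ξ) ^ 3 = -(ξ ^ 2 * ξ) by ring, hξ]; ring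
    rw [e2, e3] at hD1
    have hperm : ({1, -ξ, -1, ξ} : Multiset Fq) = ({1, -1, ξ, -ξ} : Multiset Fq) := by
      show (1 ::ₘ -ξ ::ₘ -1 ::ₘ ξ ::ₘ 0 : Multiset Fq)
        = (1 ::ₘ -1 ::ₘ ξ ::ₘ -ξ ::ₘ 0 : Multiset Fq)
      rw [Multiset.cons_swap (-ξ) (-1), Multiset.cons_swap (-ξ) ξ]
    rw [hperm] at hD1
    refine ⟨D, hD1, ?_⟩
    omega
  · -- T_h = T_{-h}
    have hA2 : Tdiff f φ h = (Tdiff f φ h).map (fun z => (-1 : Fq) * z) := by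
      apply Tdiff_eq_map_of_equiv f φ h h (-1) (Equiv.prodCongr (rhoE m) (rhoE m))
      · intro p
        constructor
        · intro hne hcon
          exact hne (by show rhoE m p.1 = rhoE m p.2; rw [hcon])
        · intro hne hcon
          exact hne ((rhoE m).injective (show rhoE m p.1 = rhoE m p.2 from hcon))
      · intro p
        show f (rhoE m p.1) - f (rhoE m p.2) = h ↔ _
        rw [hfdef, paley1fst_rhoE, paley1fst_rhoE]
      · intro p
        show φ (rhoE m p.1) - φ (rhoE m p.2) = _
        rw [hφdef, paley1snd_rhoE, paley1snd_rhoE]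
        ring
    have hA1 : Tdiff f φ (-h) = (Tdiff f φ h).map (fun z => (-1 : Fq) * z) := by
      apply Tdiff_eq_map_of_equiv f φ h (-h) (-1) (Equiv.prodComm _ _)
      · intro p
        exact ne_comm
      · intro p
        show f p.2 - f p.1 = -h ↔ f p.1 - f p.2 = h
        rw [← neg_sub (f p.1) (f p.2), neg_inj]
      · intro p
        show φ p.2 - φ p.1 = -1 * (φ p.1 - φ p.2)
        ring
    rw [hA2]
    exact hA1.symm
end

section
/- Let $p \equiv 1 \pmod 4$ be a prime power and $d \geq 4$. Let $\alpha$ be a permutation of a $d$-set $Y$ that is a product of $u = d/l$ disjoint cycles each of length $l \geq 2$, and let $a \in \mathbb{Z}_d$. If $l \geq 3$, or $l = 2$ and $a \notin \{1, d-1\}$, then there exists a bijection $\pi : Y \to \mathbb{Z}_d$ such that $\pi(y) - \pi(\alpha(y)) \not\equiv a \pmod{d}$ for every $y \in Y$. -/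
open scoped Classical


private def permCongrHom {X Y : Type*} (g : X ≃ Y) : Equiv.Perm X →* Equiv.Perm Y where
  toFun := g.permCongr
  map_one' := by ext x; simp [Equiv.Perm.one_def]
  map_mul' σ τ := by ext x; simp [Equiv.Perm.mul_def, Equiv.permCongr_def]

private lemma permCongr_pow_apply {X Y : Type*} (g : X ≃ Y) (σ : Equiv.Perm X) (n : ℤ)
    (x : X) : ((g.permCongr σ) ^ n) (g x) = g ((σ ^ n) x) := by
  have : (g.permCongr σ) ^ n = g.permCongr (σ ^ n) := by
    rw [show g.permCongr σ = permCongrHom g σ from rfl, ← map_zpow]; rfl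
  rw [this]; simp

private lemma support_permCongr {X Y : Type*} [Fintype X] [DecidableEq X] [Fintype Y]
    [DecidableEq Y] (g : X ≃ Y) (σ : Equiv.Perm X) :
    (g.permCongr σ).support = σ.support.map g.toEmbedding := by
  ext y
  simp only [Equiv.Perm.mem_support, Finset.mem_map, Equiv.permCongr_apply,
    Equiv.coe_toEmbedding]
  constructor
  · intro h
    exact ⟨g.symm y, fun hc => h (by rw [hc]; simp), by simp⟩
  · rintro ⟨x, hx, rfl⟩
    simp only [Equiv.symm_apply_apply]
    exact fun hc => hx (g.injective hc)

private lemma isCycle_permCongr {X Y : Type*} (g : X ≃ Y) {σ : Equiv.Perm X}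
    (h : σ.IsCycle) : (g.permCongr σ).IsCycle := by
  obtain ⟨x, hx, hsc⟩ := h
  refine ⟨g x, by simpa using fun hc => hx (g.injective hc), fun y hy => ?_⟩
  have hy' : σ (g.symm y) ≠ g.symm y := by
    intro hc
    apply hy
    simp [Equiv.permCongr_apply, hc]
  obtain ⟨n, hn⟩ := hsc hy'
  exact ⟨n, by rw [permCongr_pow_apply, hn]; simp⟩

private lemma disjoint_permCongr {X Y : Type*} (g : X ≃ Y) {σ τ : Equiv.Perm X}
    (h : σ.Disjoint τ) : (g.permCongr σ).Disjoint (g.permCongr τ) := by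
  intro y
  rcases h (g.symm y) with h' | h' <;> [left; right] <;>
    simp [Equiv.permCongr_apply, h']

private lemma cycleType_permCongr {X Y : Type*} [Fintype X] [DecidableEq X] [Fintype Y]
    [DecidableEq Y] (g : X ≃ Y) (σ : Equiv.Perm X) :
    (g.permCongr σ).cycleType = σ.cycleType := by
  induction σ using Equiv.Perm.cycle_induction_on with
  | base_one => rw [show g.permCongr 1 = 1 from map_one (permCongrHom g)]; simp
  | base_cycles σ hσ =>
      rw [hσ.cycleType, (isCycle_permCongr g hσ).cycleType, support_permCongr,
        Finset.card_map]
  | induction_disjoint σ τ hd hc hσ hτ =>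
      have h1 : g.permCongr (σ * τ) = g.permCongr σ * g.permCongr τ :=
        map_mul (permCongrHom g) σ τ
      rw [h1, (disjoint_permCongr g hd).cycleType_mul, hd.cycleType_mul, hσ, hτ]


private def modelPermHom (u l : ℕ) : Equiv.Perm (ZMod l) →* Equiv.Perm (Fin u × ZMod l) where
  toFun f := Equiv.prodCongr (Equiv.refl _) f
  map_one' := by ext ⟨i, j⟩ <;> rfl
  map_mul' f g' := by ext ⟨i, j⟩ <;> rfl

private def modelPerm (u l : ℕ) : Equiv.Perm (Fin u × ZMod l) :=
  modelPermHom u l (Equiv.addRight (1 : ZMod l))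

private lemma model_pow (u l : ℕ) (n : ℤ) (p : Fin u × ZMod l) :
    ((modelPerm u l) ^ n) p = (p.1, p.2 + (n : ZMod l)) := by
  have h1 : (modelPerm u l) ^ n
      = modelPermHom u l ((Equiv.addRight (1 : ZMod l)) ^ n) := (map_zpow (modelPermHom u l) _ n).symm
  rw [h1, Equiv.zsmul_addRight]
  show (p.1, p.2 + n • (1 : ZMod l)) = _
  rw [zsmul_eq_mul, mul_one]

private lemma model_cycleType (u l : ℕ) [NeZero l] (hu : 0 < u) (hl : 2 ≤ l) :
    (modelPerm u l).cycleType = Multiset.replicate u l := by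
  haveI : Fact (1 < l) := ⟨by omega⟩
  set β := modelPerm u l with hβ
  have happ : ∀ p : Fin u × ZMod l, β p = (p.1, p.2 + 1) := fun p => rfl
  have hsupp : β.support = Finset.univ := by
    ext p
    simp only [Finset.mem_univ, iff_true, Equiv.Perm.mem_support, happ]
    intro hc
    have := congrArg Prod.snd hc
    simp at this
  have hsc : ∀ p q : Fin u × ZMod l, β.SameCycle p q ↔ p.1 = q.1 := by
    intro p q
    constructor
    · rintro ⟨n, hn⟩
      rw [model_pow] at hn
      simpa using congrArg Prod.fst hn
    · intro h
      refine ⟨((q.2 - p.2).val : ℤ), ?_⟩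
      rw [model_pow]
      have : ((((q.2 - p.2).val : ℤ)) : ZMod l) = q.2 - p.2 := by
        push_cast
        simp [ZMod.natCast_val, ZMod.cast_id]
      rw [this]
      ext <;> simp [h]
  have hcyc : ∀ p : Fin u × ZMod l, (β.cycleOf p).support.card = l := by
    intro p
    have : (β.cycleOf p).support = {p.1} ×ˢ (Finset.univ : Finset (ZMod l)) := by
      ext q
      rw [Equiv.Perm.mem_support_cycleOf_iff]
      simp only [hsc, hsupp, Finset.mem_univ, and_true, Finset.mem_product,
        Finset.mem_singleton]
      exact eq_comm
    rw [this, Finset.card_product, Finset.card_singleton, one_mul, Finset.card_univ, ZMod.card]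
  have hall : ∀ n ∈ β.cycleType, n = l := by
    intro n hn
    rw [Equiv.Perm.cycleType_def, Multiset.mem_map] at hn
    obtain ⟨c, hc, rfl⟩ := hn
    have hc' := Equiv.Perm.mem_cycleFactorsFinset_iff.mp hc
    obtain ⟨p, hp⟩ := hc'.1.nonempty_support
    rw [Equiv.Perm.cycle_is_cycleOf hp hc]
    exact hcyc p
  have hrep := Multiset.eq_replicate_card.mpr hall
  have hsum : β.cycleType.sum = u * l := by
    rw [Equiv.Perm.sum_cycleType, hsupp, Finset.card_univ, Fintype.card_prod,
      Fintype.card_fin, ZMod.card]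
  have hcard : Multiset.card β.cycleType = u := by
    have h2 : Multiset.card β.cycleType * l = u * l := by
      rw [← hsum]
      conv_rhs => rw [hrep]
      rw [Multiset.sum_replicate, smul_eq_mul]
    exact Nat.eq_of_mul_eq_mul_right (by omega) h2
  rw [hrep, hcard]


private lemma cast_inj_of_lt {d : ℕ} [NeZero d] {m m' : ℕ} (hm : m < d) (hm' : m' < d)
    (h : (m : ZMod d) = m') : m = m' := by
  rw [← ZMod.val_cast_of_lt hm, ← ZMod.val_cast_of_lt hm', h]

private lemma model_label (d u l : ℕ) (hd : 4 ≤ d) (hl : 2 ≤ l) (hdu : d = u * l)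
    (a : ZMod d) (ha : 3 ≤ l ∨ (l = 2 ∧ a ≠ 1 ∧ a ≠ -1)) :
    ∃ F : Fin u × ZMod l → ZMod d, Function.Bijective F ∧
      ∀ p : Fin u × ZMod l, F p - F (p.1, p.2 + 1) ≠ a := by
  haveI : NeZero l := ⟨by omega⟩
  haveI : NeZero d := ⟨by omega⟩
  haveI : Fact (1 < l) := ⟨by omega⟩
  have hu : 0 < u := by
    rcases Nat.eq_zero_or_pos u with rfl | h
    · simp at hdu; omega
    · exact h
  have hcard : Fintype.card (Fin u × ZMod l) = Fintype.card (ZMod d) := by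
    rw [Fintype.card_prod, Fintype.card_fin, ZMod.card, ZMod.card, hdu]
  -- the natural-number injectivity core
  have hinj : ∀ (i i' : Fin u) (m m' : ℕ), m < l → m' < l →
      ((i.val + u * m : ℕ) : ZMod d) = ((i'.val + u * m' : ℕ) : ZMod d) →
      i = i' ∧ m = m' := by
    intro i i' m m' hm hm' hEq
    have hlt : i.val + u * m < d := by
      have := i.isLt
      rw [hdu]; nlinarith
    have hlt' : i'.val + u * m' < d := by
      have := i'.isLt
      rw [hdu]; nlinarith
    have hN : i.val + u * m = i'.val + u * m' := cast_inj_of_lt hlt hlt' hEq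
    have h1 : i.val = i'.val := by
      have := congrArg (· % u) hN
      simpa [Nat.add_mul_mod_self_left, Nat.mod_eq_of_lt i.isLt,
        Nat.mod_eq_of_lt i'.isLt] using this
    constructor
    · exact Fin.ext h1
    · have : u * m = u * m' := by omega
      exact Nat.eq_of_mul_eq_mul_left hu this
  rcases ha with hl3 | ⟨hl2, ha1, ha2⟩
  · -- general construction with w ∈ {1, -1}
    set h : ZMod l → ZMod d := fun x => ((u * x.val : ℕ) : ZMod d) with hh
    have key : ∀ m : ℕ, ((u * (m % l) : ℕ) : ZMod d) = ((u * m : ℕ) : ZMod d) := by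
      intro m
      have h2 : u * (m % l) + d * (m / l) = u * m := by
        rw [hdu, mul_assoc, ← Nat.mul_add, Nat.mod_add_div]
      calc ((u * (m % l) : ℕ) : ZMod d)
          = ((u * (m % l) + d * (m / l) : ℕ) : ZMod d) := by
            push_cast; simp [ZMod.natCast_self]
        _ = ((u * m : ℕ) : ZMod d) := by rw [h2]
    have hadd : ∀ x y : ZMod l, h (x + y) = h x + h y := by
      intro x y
      rw [hh]
      simp only
      rw [ZMod.val_add, key, Nat.mul_add]
      push_cast
      ring
    have h0 : h 0 = 0 := by rw [hh]; simp
    have h1u : h 1 = ((u : ℕ) : ZMod d) := by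
      rw [hh]; simp only [ZMod.val_one, mul_one]
    have hm1 : h (-1) = -(h 1) := by
      have hz : h (-1) + h 1 = 0 := by rw [← hadd]; simpa using h0
      linear_combination hz
    have hne : h 1 ≠ h (-1) := by
      rw [hm1, h1u]
      intro hc
      have h2u : ((2 * u : ℕ) : ZMod d) = 0 := by push_cast; linear_combination hc
      have hdvd := (ZMod.natCast_eq_zero_iff (2 * u) d).mp h2u
      have hle := Nat.le_of_dvd (by omega) hdvd
      rw [hdu] at hle
      nlinarith
    obtain ⟨w, hwu, hw⟩ : ∃ w : ZMod l, IsUnit w ∧ h w ≠ -a := by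
      by_cases hc : h 1 = -a
      · exact ⟨-1, isUnit_one.neg, fun hc' => hne (by rw [hc, hc'])⟩
      · exact ⟨1, isUnit_one, hc⟩
    have hF : ∀ p : Fin u × ZMod l,
        ((p.1.val : ℕ) : ZMod d) + h (w * p.2)
          = ((p.1.val + u * (w * p.2).val : ℕ) : ZMod d) := by
      intro p
      rw [hh]
      push_cast
      ring
    refine ⟨fun p => ((p.1.val : ℕ) : ZMod d) + h (w * p.2), ?_, ?_⟩
    · rw [Fintype.bijective_iff_injective_and_card]
      refine ⟨?_, hcard⟩
      intro p q hpq
      have hpq' : ((p.1.val + u * (w * p.2).val : ℕ) : ZMod d)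
          = ((q.1.val + u * (w * q.2).val : ℕ) : ZMod d) := by
        rw [← hF, ← hF]; exact hpq
      obtain ⟨h1, h2⟩ := hinj _ _ _ _ (ZMod.val_lt _) (ZMod.val_lt _) hpq'
      have h3 : w * p.2 = w * q.2 := ZMod.val_injective l h2
      have h4 : p.2 = q.2 := hwu.mul_right_injective h3
      exact Prod.ext h1 h4
    · intro p
      show ((p.1.val : ℕ) : ZMod d) + h (w * p.2)
          - (((p.1.val : ℕ) : ZMod d) + h (w * (p.2 + 1))) ≠ a
      have hstep : h (w * (p.2 + 1)) = h (w * p.2) + h w := by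
        rw [mul_add, mul_one, hadd]
      rw [hstep]
      intro hc
      exact hw (by linear_combination -hc)
  · -- special construction for l = 2
    subst hl2
    refine ⟨fun p => ((2 * p.1.val + (1 - p.2.val) : ℕ) : ZMod d), ?_, ?_⟩
    · rw [Fintype.bijective_iff_injective_and_card]
      refine ⟨?_, hcard⟩
      intro p q hpq
      have hp2 := ZMod.val_lt p.2
      have hq2 := ZMod.val_lt q.2
      have hlt : ∀ r : Fin u × ZMod 2, 2 * r.1.val + (1 - r.2.val) < d := by
        intro r
        have := r.1.isLt
        have := ZMod.val_lt r.2
        rw [hdu]; omega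
      have hN := cast_inj_of_lt (hlt p) (hlt q) hpq
      have h1 : p.1 = q.1 := Fin.ext (by omega)
      have h2 : p.2.val = q.2.val := by omega
      exact Prod.ext h1 (ZMod.val_injective 2 h2)
    · rintro ⟨i, j⟩
      have hv : j = 0 ∨ j = 1 := by
        have h2 := ZMod.val_lt j
        have hj : j.val = 0 ∨ j.val = 1 := by omega
        rcases hj with hj | hj
        · left; exact ZMod.val_injective 2 (by simpa using hj)
        · right; exact ZMod.val_injective 2 (by rw [hj]; rfl)
      rcases hv with rfl | rfl
      · show ((2 * i.val + (1 - (0 : ZMod 2).val) : ℕ) : ZMod d)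
            - ((2 * i.val + (1 - ((0 : ZMod 2) + 1).val) : ℕ) : ZMod d) ≠ a
        have e0 : (0 : ZMod 2).val = 0 := rfl
        have e1 : ((0 : ZMod 2) + 1).val = 1 := rfl
        rw [e0, e1]
        simp only [Nat.sub_zero, Nat.sub_self]
        push_cast
        intro hc
        exact ha1 (by linear_combination -hc)
      · show ((2 * i.val + (1 - (1 : ZMod 2).val) : ℕ) : ZMod d)
            - ((2 * i.val + (1 - ((1 : ZMod 2) + 1).val) : ℕ) : ZMod d) ≠ a
        have e1 : (1 : ZMod 2).val = 1 := rfl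
        have e2 : ((1 : ZMod 2) + 1).val = 0 := rfl
        rw [e1, e2]
        simp only [Nat.sub_zero, Nat.sub_self]
        push_cast
        intro hc
        exact ha2 (by linear_combination -hc)


private lemma modelPerm_apply (u l : ℕ) (p : Fin u × ZMod l) :
    modelPerm u l p = (p.1, p.2 + 1) := rfl

/-- The combinatorial core of Theorem 3.8: let `d ≥ 4`, let `α` be a permutation of a
`d`-set `Y` which is a product of `u = d/l` disjoint cycles each of length `l ≥ 2`, and
let `a ∈ ℤ_d`.  If `l ≥ 3`, or `l = 2` and `a ∉ {1, d-1}`, then there is a bijection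
`π : Y → ℤ_d` with `π y - π (α y) ≢ a (mod d)` for every `y ∈ Y`. -/
theorem paper_stmt_16 {Y : Type*} [Fintype Y] [DecidableEq Y] (d u l : ℕ)
    (hd : 4 ≤ d) (hl : 2 ≤ l) (hdu : d = u * l) (hY : Fintype.card Y = d)
    (α : Equiv.Perm Y) (hα : α.cycleType = Multiset.replicate u l)
    (a : ZMod d) (ha : 3 ≤ l ∨ (l = 2 ∧ a ≠ 1 ∧ a ≠ -1)) :
    ∃ π : Y → ZMod d, Function.Bijective π ∧ ∀ y : Y, π y - π (α y) ≠ a := by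
  haveI : NeZero l := ⟨by omega⟩
  have hu : 0 < u := by
    rcases Nat.eq_zero_or_pos u with rfl | h
    · simp at hdu; omega
    · exact h
  have hβ : (modelPerm u l).cycleType = Multiset.replicate u l := model_cycleType u l hu hl
  have hcard : Fintype.card Y = Fintype.card (Fin u × ZMod l) := by
    rw [hY, Fintype.card_prod, Fintype.card_fin, ZMod.card, hdu]
  obtain ⟨g⟩ : Nonempty (Y ≃ (Fin u × ZMod l)) := ⟨Fintype.equivOfCardEq hcard⟩
  have hconj : IsConj (g.permCongr α) (modelPerm u l) :=
    Equiv.Perm.isConj_of_cycleType_eq (by rw [cycleType_permCongr, hα, hβ])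
  obtain ⟨c, hc⟩ := isConj_iff.mp hconj
  have hc2 : c * g.permCongr α = modelPerm u l * c := by rw [← hc]; group
  have hc3 : ∀ p, c ((g.permCongr α) p) = modelPerm u l (c p) := by
    intro p
    have := Equiv.ext_iff.mp hc2 p
    simpa [Equiv.Perm.mul_apply] using this
  set e : Y ≃ (Fin u × ZMod l) := g.trans c with he
  have key : ∀ y : Y, e (α y) = ((e y).1, (e y).2 + 1) := by
    intro y
    have h1 : (g.permCongr α) (g y) = g (α y) := by simp [Equiv.permCongr_apply]
    have h2 : e (α y) = c (g (α y)) := rfl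
    rw [h2, ← h1, hc3, modelPerm_apply]
    rfl
  obtain ⟨F, hFbij, hFdiff⟩ := model_label d u l hd hl hdu a ha
  refine ⟨F ∘ e, hFbij.comp e.bijective, ?_⟩
  intro y
  show F (e y) - F (e (α y)) ≠ a
  rw [key y]
  exact hFdiff (e y)
end

section
/- Let $p \equiv 3 \pmod 4$ be a prime power, $\delta$ a generator of the group of nonzero squares of $\mathbb{F}_p$, and consider the second-type Paley sequence $(f_0,\dots,f_p) = (0,0,\delta,\delta,\delta^2,\delta^2,\ldots,\delta^{(p-1)/2},\delta^{(p-1)/2})$ together with second coordinates $(\phi_0,\dots,\phi_p) = (y,-y,y_1,-y_1,\ldots,y_{(p-1)/2},-y_{(p-1)/2})$ with $y, y_i \in \mathbb{F}_q^*$ and $q$ odd. Then for each nonzero $h \in \mathbb{F}_p$, the multiset $T_h = [\phi_a - \phi_b : f_a - f_b = h, a \neq b]$ satisfies $T_h = \{1,-1\} \cdot D_h$ for a multiset $D_h$ of size $(p+1)/2$ all of whose entries are of the form $y_i \pm y_j$ or $y_i \pm y$, and $T_h = T_{-h}$; moreover $T_0 = \{1,-1\}\cdot(2\cdot[y,y_1,\ldots,y_{(p-1)/2}])$.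 -/
open scoped Classical

/-- The second-type Paley sequence `(0, 0, δ, δ, δ², δ², …, δ^m, δ^m)` with
`m = (p-1)/2`: position `(i,t)` carries `0` if `i = 0` and `δ^i` otherwise. -/
def paley2fst {Fp : Type*} [Field Fp] (δ : Fp) (m : ℕ) : Fin (m + 1) × Fin 2 → Fp :=
  fun p => if p.1 = 0 then 0 else δ ^ (p.1 : ℕ)

/-- The corresponding second coordinates `(y, -y, y₁, -y₁, …, y_m, -y_m)`, encoded by a
single tuple `y : Fin (m+1) → Fq` with `y 0` playing the role of `y`. -/
def paley2snd {Fq : Type*} [Field Fq] {m : ℕ} (y : Fin (m + 1) → Fq) :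
    Fin (m + 1) × Fin 2 → Fq :=
  fun p => (if p.2 = 0 then 1 else -1) * y p.1

set_option linter.unusedSectionVars false
set_option linter.unusedVariables false
set_option maxHeartbeats 1000000

open Finset

section helpers
variable {Fp : Type*} [Field Fp] [Fintype Fp] [DecidableEq Fp]

lemma ringChar_ne_two_Fp (m : ℕ) (hm : Fintype.card Fp = 2 * m + 1) : ringChar Fp ≠ 2 := by
  intro hc
  have := FiniteField.even_card_of_char_two (F := Fp) hc
  omega

lemma two_ne_zero_Fp (m : ℕ) (hm : Fintype.card Fp = 2 * m + 1) : (2 : Fp) ≠ 0 := by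
  intro h
  have hd : ringChar Fp ∣ 2 := (ringChar.spec Fp 2).mp (by exact_mod_cast h)
  have h0 : ringChar Fp ≠ 0 := CharP.ringChar_ne_zero_of_finite Fp
  have h1 : ringChar Fp ≠ 1 := CharP.ringChar_ne_one
  have h2 : ringChar Fp ≠ 2 := ringChar_ne_two_Fp m hm
  have := Nat.le_of_dvd (by norm_num) hd
  omega

lemma sq_or_neg_sq (hp4 : Fintype.card Fp % 4 = 3) {c : Fp} (hc : c ≠ 0) :
    IsSquare c ∨ IsSquare (-c) := by
  by_contra hcon
  push_neg at hcon
  have hns1 : ¬ IsSquare (-1 : Fp) := by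
    rw [FiniteField.isSquare_neg_one_iff]; simp [hp4]
  have e1 : quadraticChar Fp c = -1 := quadraticChar_neg_one_iff_not_isSquare.mpr hcon.1
  have e2 : quadraticChar Fp (-c) = -1 := quadraticChar_neg_one_iff_not_isSquare.mpr hcon.2
  have e3 : quadraticChar Fp (-c) = quadraticChar Fp (-1) * quadraticChar Fp c := by
    rw [← map_mul]; ring_nf
  have e4 : quadraticChar Fp (-1) = 1 := by
    rw [e1, e2] at e3; linarith
  exact hns1 ((quadraticChar_one_iff_isSquare (neg_ne_zero.mpr one_ne_zero)).mp e4)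

lemma card_nonzero_squares (m : ℕ) (hm : Fintype.card Fp = 2 * m + 1)
    (h2 : (2 : Fp) ≠ 0) :
    (univ.filter (fun x : Fp => x ≠ 0 ∧ IsSquare x)).card = m := by
  set Snz := univ.filter (fun x : Fp => x ≠ 0 ∧ IsSquare x) with hSnz
  have key : ((univ : Finset Fp).erase 0).card = ∑ s ∈ Snz, ((univ.erase 0).filter (fun a : Fp => a * a = s)).card := by
    apply Finset.card_eq_sum_card_fiberwise
    intro a ha
    rw [Finset.mem_coe, Finset.mem_erase] at ha
    rw [Finset.mem_coe, hSnz, Finset.mem_filter]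
    exact ⟨Finset.mem_univ _, mul_ne_zero ha.1 ha.1, ⟨a, rfl⟩⟩
  have fib : ∀ s ∈ Snz, ((univ.erase 0).filter (fun a : Fp => a * a = s)).card = 2 := by
    intro s hs
    rw [hSnz, Finset.mem_filter] at hs
    obtain ⟨-, hs0, b, hb⟩ := hs
    have hbne : b ≠ 0 := by rintro rfl; simp at hb; exact hs0 hb
    have hset : (univ.erase 0).filter (fun a : Fp => a * a = s) = {b, -b} := by
      ext a
      simp only [Finset.mem_filter, Finset.mem_erase, Finset.mem_univ, true_and, and_true,
        Finset.mem_insert, Finset.mem_singleton]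
      constructor
      · rintro ⟨ha0, ha⟩
        have : (a - b) * (a + b) = 0 := by rw [hb] at ha; ring_nf; linear_combination ha
        rcases mul_eq_zero.mp this with h | h
        · left; exact sub_eq_zero.mp h
        · right; exact eq_neg_of_add_eq_zero_left h
      · rintro (rfl | rfl)
        · exact ⟨hbne, hb.symm⟩
        · exact ⟨neg_ne_zero.mpr hbne, by rw [hb]; ring⟩
    rw [hset]
    rw [Finset.card_pair]
    intro hbb
    apply hbne
    have : (2 : Fp) * b = 0 := by linear_combination hbb
    rcases mul_eq_zero.mp this with h | h
    · exact absurd h h2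
    · exact h
  rw [Finset.sum_congr rfl fib, Finset.sum_const, smul_eq_mul] at key
  have hcard : ((univ : Finset Fp).erase 0).card = 2 * m := by
    rw [Finset.card_erase_of_mem (Finset.mem_univ _), Finset.card_univ, hm]
    omega
  omega

lemma card_squares (m : ℕ) (hm : Fintype.card Fp = 2 * m + 1) (h2 : (2 : Fp) ≠ 0) :
    (univ.filter (fun x : Fp => IsSquare x)).card = m + 1 := by
  have : (univ.filter (fun x : Fp => IsSquare x)) =
      insert 0 (univ.filter (fun x : Fp => x ≠ 0 ∧ IsSquare x)) := by
    ext x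
    simp only [Finset.mem_filter, Finset.mem_univ, true_and, Finset.mem_insert]
    constructor
    · intro hx
      by_cases h : x = 0
      · exact Or.inl h
      · exact Or.inr ⟨h, hx⟩
    · rintro (rfl | ⟨-, hx⟩)
      · exact ⟨0, (mul_zero 0).symm⟩
      · exact hx
  rw [this, Finset.card_insert_of_notMem (by simp), card_nonzero_squares m hm h2]

lemma delta_facts (m : ℕ) (hm : Fintype.card Fp = 2 * m + 1) (h2 : (2 : Fp) ≠ 0)
    (hSnz : (univ.filter (fun x : Fp => x ≠ 0 ∧ IsSquare x)).card = m)
    {δ : Fp} (hδ : ∀ x : Fp, (x ≠ 0 ∧ IsSquare x) ↔ ∃ i : ℕ, δ ^ i = x) :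
    orderOf δ = m := by
  have hδ0 : δ ≠ 0 ∧ IsSquare δ := (hδ δ).mpr ⟨1, pow_one δ⟩
  set u : Fpˣ := Units.mk0 δ hδ0.1 with hu
  have huv : (u : Fp) = δ := rfl
  have hopos : 0 < orderOf δ := by
    rw [← huv, orderOf_units]
    exact orderOf_pos u
  set o := orderOf δ with ho
  have himg : Finset.image (fun i => δ ^ i) (Finset.range o) =
      univ.filter (fun x : Fp => x ≠ 0 ∧ IsSquare x) := by
    ext x
    simp only [Finset.mem_image, Finset.mem_range, Finset.mem_filter, Finset.mem_univ, true_and]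
    constructor
    · rintro ⟨i, -, rfl⟩
      exact (hδ _).mpr ⟨i, rfl⟩
    · intro hx
      obtain ⟨n, hn⟩ := (hδ x).mp hx
      exact ⟨n % o, Nat.mod_lt _ hopos, by rw [ho, pow_mod_orderOf, hn]⟩
  have hinj : Set.InjOn (fun i => δ ^ i) (Finset.range o : Set ℕ) := by
    intro i hi j hj hij
    simp only [Finset.coe_range, Set.mem_Iio] at hi hj
    have : u ^ i = u ^ j := by
      apply Units.ext
      simpa [Units.val_pow_eq_pow_val, huv] using hij
    have hmod := pow_eq_pow_iff_modEq.mp this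
    rw [← orderOf_units, huv, ← ho] at hmod
    exact hmod.eq_of_lt_of_lt hi hj
  have := Finset.card_image_of_injOn hinj
  rw [himg, hSnz, Finset.card_range] at this
  omega

lemma g_inj (m : ℕ) {δ : Fp} (hδ0 : δ ≠ 0) (hord : orderOf δ = m) :
    Function.Injective (fun i : Fin (m + 1) => if i = 0 then 0 else δ ^ (i : ℕ)) := by
  set u : Fpˣ := Units.mk0 δ hδ0 with hu
  have huv : (u : Fp) = δ := rfl
  intro i j hij
  simp only at hij
  by_cases hi : i = 0 <;> by_cases hj : j = 0
  · rw [hi, hj]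
  · rw [if_pos hi, if_neg hj] at hij
    exact absurd hij.symm (pow_ne_zero _ hδ0)
  · rw [if_neg hi, if_pos hj] at hij
    exact absurd hij (pow_ne_zero _ hδ0)
  · rw [if_neg hi, if_neg hj] at hij
    have hiv : 1 ≤ (i : ℕ) := Nat.one_le_iff_ne_zero.mpr (fun h => hi (Fin.ext h))
    have hjv : 1 ≤ (j : ℕ) := Nat.one_le_iff_ne_zero.mpr (fun h => hj (Fin.ext h))
    have hib : (i : ℕ) ≤ m := Nat.lt_succ_iff.mp i.isLt
    have hjb : (j : ℕ) ≤ m := Nat.lt_succ_iff.mp j.isLt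
    have hpow : u ^ (i : ℕ) = u ^ (j : ℕ) := by
      apply Units.ext
      simpa [Units.val_pow_eq_pow_val, huv] using hij
    have hmod : (i : ℕ) % m = (j : ℕ) % m := by
      have := pow_eq_pow_iff_modEq.mp hpow
      rwa [← orderOf_units, huv, hord] at this
    apply Fin.ext
    rcases Nat.lt_or_ge (i : ℕ) m with hi' | hi' <;> rcases Nat.lt_or_ge (j : ℕ) m with hj' | hj'
    · rwa [Nat.mod_eq_of_lt hi', Nat.mod_eq_of_lt hj'] at hmod
    · have hjm : (j : ℕ) = m := le_antisymm hjb hj'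
      rw [Nat.mod_eq_of_lt hi', hjm, Nat.mod_self] at hmod
      omega
    · have him : (i : ℕ) = m := le_antisymm hib hi'
      rw [Nat.mod_eq_of_lt hj', him, Nat.mod_self] at hmod
      omega
    · omega

lemma g_range (m : ℕ) (hm1 : 1 ≤ m) {δ : Fp}
    (hδ : ∀ x : Fp, (x ≠ 0 ∧ IsSquare x) ↔ ∃ i : ℕ, δ ^ i = x)
    (hord : orderOf δ = m) (x : Fp) :
    IsSquare x ↔ ∃ i : Fin (m + 1), (if i = 0 then 0 else δ ^ (i : ℕ)) = x := by
  have hδ0 : δ ≠ 0 ∧ IsSquare δ := (hδ δ).mpr ⟨1, pow_one δ⟩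
  constructor
  · intro hx
    by_cases hx0 : x = 0
    · exact ⟨0, by simp [hx0]⟩
    · obtain ⟨n, hn⟩ := (hδ x).mp ⟨hx0, hx⟩
      have hmo : δ ^ (n % m) = x := by rw [← hord, pow_mod_orderOf, hn]
      by_cases hr : n % m = 0
      · refine ⟨⟨m, by omega⟩, ?_⟩
        have h0 : (⟨m, by omega⟩ : Fin (m + 1)) ≠ 0 := by
          intro h
          have := Fin.val_eq_of_eq h
          simp at this
          omega
        rw [if_neg h0]
        calc δ ^ m = δ ^ orderOf δ := by rw [hord]
          _ = 1 := pow_orderOf_eq_one δ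
          _ = δ ^ (n % m) := by rw [hr, pow_zero]
          _ = x := hmo
      · refine ⟨⟨n % m, by have := Nat.mod_lt n (show 0 < m by omega); omega⟩, ?_⟩
        have h0 : (⟨n % m, by have := Nat.mod_lt n (show 0 < m by omega); omega⟩ : Fin (m + 1)) ≠ 0 := by
          intro h
          exact hr (Fin.val_eq_of_eq h)
        rw [if_neg h0]
        exact hmo
  · rintro ⟨i, rfl⟩
    by_cases hi : i = 0
    · rw [if_pos hi]; exact ⟨0, (mul_zero 0).symm⟩
    · rw [if_neg hi]
      exact ((hδ _).mpr ⟨(i : ℕ), rfl⟩).2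

noncomputable def Vset (h : Fp) : Finset Fp :=
  univ.filter (fun v : Fp => IsSquare v ∧ IsSquare (v + h))

lemma mem_Vset {h v : Fp} : v ∈ Vset h ↔ IsSquare v ∧ IsSquare (v + h) := by
  simp [Vset]

lemma Vset_card_mul {a : Fp} (ha : a ≠ 0) (has : IsSquare a) (h : Fp) :
    (Vset (a * h)).card = (Vset h).card := by
  have hainv : IsSquare a⁻¹ := by
    obtain ⟨r, hr⟩ := has
    exact ⟨r⁻¹, by rw [hr, mul_inv]⟩
  apply Finset.card_nbij' (fun v => a⁻¹ * v) (fun v => a * v)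
  · intro v hv
    rw [Finset.mem_coe, mem_Vset] at hv ⊢
    constructor
    · exact hainv.mul hv.1
    · have : a⁻¹ * v + h = a⁻¹ * (v + a * h) := by field_simp
      rw [this]
      exact hainv.mul hv.2
  · intro v hv
    rw [Finset.mem_coe, mem_Vset] at hv ⊢
    constructor
    · exact has.mul hv.1
    · have : a * v + a * h = a * (v + h) := by ring
      rw [this]
      exact has.mul hv.2
  · intro v _; field_simp
  · intro v _; field_simp

lemma Vset_card_neg (h : Fp) : (Vset (-h)).card = (Vset h).card := by
  apply Finset.card_nbij' (fun v => v - h) (fun v => v + h)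
  · intro v hv
    rw [Finset.mem_coe, mem_Vset] at hv ⊢
    refine ⟨?_, ?_⟩
    · rw [show v + -h = v - h by ring] at hv
      exact hv.2
    · rw [show v - h + h = v by ring]
      exact hv.1
  · intro v hv
    rw [Finset.mem_coe, mem_Vset] at hv ⊢
    refine ⟨hv.2, ?_⟩
    rw [show v + h + -h = v by ring]
    exact hv.1
  · intro v _; ring
  · intro v _; ring

lemma Vset_card_const (hp4 : Fintype.card Fp % 4 = 3) {h h' : Fp} (hh : h ≠ 0) (hh' : h' ≠ 0) :
    (Vset h').card = (Vset h).card := by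
  have hc : h' * h⁻¹ ≠ 0 := mul_ne_zero hh' (inv_ne_zero hh)
  rcases sq_or_neg_sq hp4 hc with hs | hs
  · have he : h' = (h' * h⁻¹) * h := by field_simp
    rw [he]
    exact Vset_card_mul hc hs h
  · have he : h' = (-(h' * h⁻¹)) * (-h) := by field_simp
    rw [he, Vset_card_mul (neg_ne_zero.mpr hc) hs (-h), Vset_card_neg]

lemma Vset_sum (m : ℕ) (hm : Fintype.card Fp = 2 * m + 1) (h2 : (2 : Fp) ≠ 0) :
    ∑ h' ∈ ((univ : Finset Fp).erase 0), (Vset h').card = (m + 1) * m := by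
  set U : Finset (Fp × Fp) := (((univ : Finset Fp).erase 0) ×ˢ (univ : Finset Fp)).filter
    (fun q : Fp × Fp => IsSquare q.2 ∧ IsSquare (q.2 + q.1)) with hU
  have step1 : U.card = ∑ h' ∈ ((univ : Finset Fp).erase 0), (U.filter (fun q => q.1 = h')).card := by
    apply Finset.card_eq_sum_card_fiberwise
    intro q hq
    rw [Finset.mem_coe, hU, Finset.mem_filter, Finset.mem_product] at hq
    exact hq.1.1
  have step2 : ∀ h' ∈ ((univ : Finset Fp).erase 0),
      (U.filter (fun q => q.1 = h')).card = (Vset h').card := by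
    intro h' hh'
    apply Finset.card_nbij' (fun q => q.2) (fun v => (h', v))
    · intro q hq
      rw [Finset.mem_coe, Finset.mem_filter, hU, Finset.mem_filter] at hq
      obtain ⟨⟨-, hsq⟩, heq⟩ := hq
      rw [Finset.mem_coe, mem_Vset]
      rw [heq] at hsq
      exact hsq
    · intro v hv
      rw [Finset.mem_coe, mem_Vset] at hv
      rw [Finset.mem_coe, Finset.mem_filter, hU, Finset.mem_filter, Finset.mem_product]
      exact ⟨⟨⟨hh', Finset.mem_univ _⟩, hv⟩, rfl⟩
    · intro q hq
      rw [Finset.mem_coe, Finset.mem_filter] at hq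
      rw [← hq.2]
    · intro v _
      rfl
  have step3 : U.card = (m + 1) * m := by
    set SF : Finset Fp := univ.filter (fun x : Fp => IsSquare x) with hSF
    set O : Finset (Fp × Fp) := (SF ×ˢ SF).filter (fun q => q.1 ≠ q.2) with hO
    have hUO : U.card = O.card := by
      apply Finset.card_nbij' (fun q => (q.2 + q.1, q.2)) (fun q => (q.1 - q.2, q.2))
      · intro q hq
        rw [Finset.mem_coe, hU, Finset.mem_filter, Finset.mem_product, Finset.mem_erase] at hq
        rw [Finset.mem_coe, hO, Finset.mem_filter, Finset.mem_product, hSF]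
        refine ⟨⟨by simpa using hq.2.2, by simpa using hq.2.1⟩, ?_⟩
        simp only [ne_eq]
        intro hcon
        apply hq.1.1.1
        linear_combination hcon
      · intro q hq
        rw [Finset.mem_coe, hO, Finset.mem_filter, Finset.mem_product, hSF] at hq
        rw [Finset.mem_coe, hU, Finset.mem_filter, Finset.mem_product, Finset.mem_erase]
        refine ⟨⟨⟨?_, Finset.mem_univ _⟩, Finset.mem_univ _⟩, ?_, ?_⟩
        · intro hcon
          exact hq.2 (by linear_combination hcon)
        · simpa using hq.1.2
        · rw [show q.2 + (q.1 - q.2) = q.1 by ring]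
          simpa using hq.1.1
      · intro q _
        simp
      · intro q _
        simp
    have hOcard : O.card = (m + 1) * m := by
      have hprod : (SF ×ˢ SF).card = (m + 1) * (m + 1) := by
        rw [Finset.card_product, card_squares m hm h2]
      have hdiag : ((SF ×ˢ SF).filter (fun q => q.1 = q.2)).card = m + 1 := by
        rw [← card_squares m hm h2]
        apply Finset.card_nbij' (fun q => q.1) (fun v => (v, v))
        · intro q hq
          rw [Finset.mem_coe, Finset.mem_filter, Finset.mem_product] at hq
          exact hq.1.1
        · intro v hv
          rw [Finset.mem_coe, Finset.mem_filter, Finset.mem_product]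
          exact ⟨⟨hv, hv⟩, rfl⟩
        · intro q hq
          rw [Finset.mem_coe, Finset.mem_filter] at hq
          rw [Prod.ext_iff]
          exact ⟨rfl, hq.2⟩
        · intro v _
          rfl
      have := Finset.card_filter_add_card_filter_not (s := SF ×ˢ SF)
        (p := fun q => q.1 = q.2)
      rw [hprod] at this
      have hOc : (Finset.filter (fun q => ¬ q.1 = q.2) (SF ×ˢ SF)).card = O.card := rfl
      have harith : (m + 1) * (m + 1) = (m + 1) * m + (m + 1) := by ring
      omega
    rw [hUO, hOcard]
  rw [← Finset.sum_congr rfl step2, ← step1]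
  exact step3

lemma Vset_card_eq (m : ℕ) (hm : Fintype.card Fp = 2 * m + 1)
    (hp4 : Fintype.card Fp % 4 = 3) (h2 : (2 : Fp) ≠ 0) {h : Fp} (hh : h ≠ 0) :
    2 * (Vset h).card = m + 1 := by
  have hm1 : 1 ≤ m := by
    have := Fintype.one_lt_card (α := Fp)
    omega
  have hsum := Vset_sum m hm h2
  rw [Finset.sum_congr rfl (fun h' hh' => Vset_card_const hp4 hh (Finset.mem_erase.mp hh').1)]
    at hsum
  rw [Finset.sum_const, smul_eq_mul] at hsum
  have hce : ((univ : Finset Fp).erase 0).card = 2 * m := by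
    rw [Finset.card_erase_of_mem (Finset.mem_univ _), Finset.card_univ, hm]
    omega
  rw [hce] at hsum
  apply Nat.eq_of_mul_eq_mul_left (show 0 < m by omega)
  calc m * (2 * (Vset h).card) = 2 * m * (Vset h).card := by ring
    _ = (m + 1) * m := hsum
    _ = m * (m + 1) := by ring

end helpers

section mainsec
variable {Fp Fq : Type*} [Field Fp] [Fintype Fp] [DecidableEq Fp] [Field Fq]

lemma paley2snd_sigma (m : ℕ) (y : Fin (m + 1) → Fq) (i : Fin (m + 1)) (s : Fin 2) :
    paley2snd y (i, if s = 0 then 1 else 0) = - paley2snd y (i, s) := by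
  fin_cases s <;> simp [paley2snd] <;> ring

lemma Tdiff_neg (m : ℕ) (δ : Fp) (y : Fin (m + 1) → Fq) (h : Fp) :
    Tdiff (paley2fst δ m) (paley2snd y) (-h) = Tdiff (paley2fst δ m) (paley2snd y) h := by
  set σ : Fin 2 → Fin 2 := fun s => if s = 0 then 1 else 0 with hσ
  have hσinv : ∀ s, σ (σ s) = s := by decide
  set e : (Fin (m+1) × Fin 2) × (Fin (m+1) × Fin 2) → (Fin (m+1) × Fin 2) × (Fin (m+1) × Fin 2) :=
    fun q => ((q.2.1, σ q.2.2), (q.1.1, σ q.1.2)) with he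
  have heinv : ∀ q, e (e q) = q := by
    intro q
    simp only [he, hσinv]
  have heinj : Function.Injective e := Function.LeftInverse.injective heinv
  have hσinj : Function.Injective σ := Function.LeftInverse.injective hσinv
  set W : Fp → Finset ((Fin (m+1) × Fin 2) × (Fin (m+1) × Fin 2)) := fun h' =>
    (Finset.univ.offDiag.filter fun p => paley2fst δ m p.1 - paley2fst δ m p.2 = h') with hWdef
  have hmem : ∀ (h' : Fp) q, q ∈ Finset.map ⟨e, heinj⟩ (W h') ↔ e q ∈ W h' := by
    intro h' q
    rw [Finset.mem_map]
    constructor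
    · rintro ⟨a, ha, rfl⟩
      simpa [Function.Embedding.coeFn_mk, heinv] using ha
    · intro hq
      exact ⟨e q, hq, heinv q⟩
  have hset : W (-h) = Finset.map ⟨e, heinj⟩ (W h) := by
    ext q
    rw [hmem]
    simp only [hWdef, Finset.mem_filter, Finset.mem_offDiag, Finset.mem_univ, true_and, he]
    have hFe1 : paley2fst δ m (q.2.1, σ q.2.2) = paley2fst δ m q.2 := rfl
    have hFe2 : paley2fst δ m (q.1.1, σ q.1.2) = paley2fst δ m q.1 := rfl
    rw [hFe1, hFe2]
    constructor
    · rintro ⟨hne, heq⟩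
      refine ⟨?_, by linear_combination -heq⟩
      intro hcon
      apply hne
      rw [Prod.ext_iff] at hcon ⊢
      exact ⟨(hcon.1).symm, (hσinj (hcon.2)).symm⟩
    · rintro ⟨hne, heq⟩
      refine ⟨?_, by linear_combination -heq⟩
      intro hcon
      apply hne
      rw [hcon]
  show (W (-h)).val.map _ = (W h).val.map _
  rw [hset, Finset.map_val, Multiset.map_map]
  apply Multiset.map_congr rfl
  intro q _
  show paley2snd y (q.2.1, σ q.2.2) - paley2snd y (q.1.1, σ q.1.2)
      = paley2snd y q.1 - paley2snd y q.2
  rw [show (q.2.1, σ q.2.2) = (q.2.1, if q.2.2 = 0 then 1 else 0) from rfl,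
    show (q.1.1, σ q.1.2) = (q.1.1, if q.1.2 = 0 then 1 else 0) from rfl,
    paley2snd_sigma, paley2snd_sigma]
  ring

lemma univ2val : ((Finset.univ : Finset (Fin 2 × Fin 2))).val =
    ({((0:Fin 2),(0:Fin 2)), (0,1), (1,1), (1,0)} : Multiset (Fin 2 × Fin 2)) := by decide

lemma Tdiff_bind (m : ℕ) (δ : Fp) (y : Fin (m + 1) → Fq) {h : Fp} (hh : h ≠ 0) :
    Tdiff (paley2fst δ m) (paley2snd y) h =
      ((Finset.univ.filter (fun ij : Fin (m+1) × Fin (m+1) =>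
        paley2fst δ m (ij.1, 0) - paley2fst δ m (ij.2, 0) = h)).val.bind
        (fun ij => ({y ij.1 - y ij.2, y ij.1 + y ij.2} : Multiset Fq) +
          ({y ij.1 - y ij.2, y ij.1 + y ij.2} : Multiset Fq).map (fun z => -1 * z))) := by
  set P : Finset (Fin (m+1) × Fin (m+1)) := Finset.univ.filter (fun ij : Fin (m+1) × Fin (m+1) =>
    paley2fst δ m (ij.1, 0) - paley2fst δ m (ij.2, 0) = h) with hP
  have hW : (Finset.univ.offDiag.filter
        fun p : (Fin (m+1) × Fin 2) × (Fin (m+1) × Fin 2) =>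
          paley2fst δ m p.1 - paley2fst δ m p.2 = h)
      = Finset.map (Equiv.prodProdProdComm (Fin (m+1)) (Fin (m+1)) (Fin 2) (Fin 2)).toEmbedding
        (P ×ˢ (Finset.univ : Finset (Fin 2 × Fin 2))) := by
    ext q
    rw [Finset.mem_map_equiv]
    simp only [Equiv.prodProdProdComm_symm, Finset.mem_product, Finset.mem_univ, and_true,
      Finset.mem_filter, Finset.mem_offDiag, true_and, hP, Equiv.prodProdProdComm_apply,
      Prod.fst, Prod.snd]
    constructor
    · rintro ⟨hne, heq⟩
      exact heq
    · intro heq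
      refine ⟨?_, heq⟩
      intro hcon
      apply hh
      rw [← heq, hcon]
      ring
  show (Finset.univ.offDiag.filter _).val.map _ = _
  rw [hW, Finset.map_val, Multiset.map_map, Finset.product_val]
  rw [show (P.val ×ˢ (Finset.univ : Finset (Fin 2 × Fin 2)).val)
      = P.val.bind (fun a => Multiset.map (Prod.mk a) (Finset.univ : Finset (Fin 2 × Fin 2)).val)
      from rfl]
  rw [Multiset.map_bind]
  apply Multiset.bind_congr
  intro ij hij
  rw [Multiset.map_map, univ2val]
  show Multiset.map _ (((0:Fin 2),(0:Fin 2)) ::ₘ (0,1) ::ₘ (1,1) ::ₘ {(1,0)}) = _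
  rw [Multiset.map_cons, Multiset.map_cons, Multiset.map_cons, Multiset.map_singleton]
  simp only [Function.comp_apply, Equiv.prodProdProdComm_apply, paley2snd]
  norm_num
  set a := y ij.1 with ha
  set b := y ij.2 with hb
  rw [show b - a = -a + b from by ring, show -b + -a = -a - b from by ring]
  conv_rhs => rw [Multiset.cons_swap (-a + b) (a - b), Multiset.cons_swap (-a + b) (a + b)]

lemma od2val : ((Finset.univ : Finset (Fin 2)).offDiag).val =
    ({((0:Fin 2),(1:Fin 2)), (1,0)} : Multiset (Fin 2 × Fin 2)) := by decide

lemma Tdiff_zero (m : ℕ) (δ : Fp) (y : Fin (m + 1) → Fq)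
    (hFinj : ∀ i j : Fin (m+1), paley2fst δ m (i, (0:Fin 2)) = paley2fst δ m (j, (0:Fin 2)) → i = j) :
    Tdiff (paley2fst δ m) (paley2snd y) 0 =
      (({1, -1} : Multiset Fq).bind fun c =>
        ((Finset.univ : Finset (Fin (m + 1))).val.map fun i => 2 * y i).map fun z => c * z) := by
  have hFdep : ∀ p : Fin (m+1) × Fin 2, paley2fst δ m p = paley2fst δ m (p.1, (0:Fin 2)) := fun p => rfl
  set e : Fin (m+1) × (Fin 2 × Fin 2) → (Fin (m+1) × Fin 2) × (Fin (m+1) × Fin 2) :=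
    fun q => ((q.1, q.2.1), (q.1, q.2.2)) with he
  have heinj : Function.Injective e := by
    intro q q' hq
    rw [he, Prod.ext_iff, Prod.ext_iff, Prod.ext_iff] at hq
    obtain ⟨⟨h1, h2⟩, -, h3⟩ := hq
    exact Prod.ext h1 (Prod.ext h2 h3)
  have hW : (Finset.univ.offDiag.filter
        fun p : (Fin (m+1) × Fin 2) × (Fin (m+1) × Fin 2) =>
          paley2fst δ m p.1 - paley2fst δ m p.2 = 0)
      = Finset.map ⟨e, heinj⟩
          ((Finset.univ : Finset (Fin (m+1))) ×ˢ ((Finset.univ : Finset (Fin 2)).offDiag)) := by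
    ext q
    simp only [Finset.mem_map, Finset.mem_filter, Finset.mem_offDiag, Finset.mem_univ, true_and,
      Finset.mem_product, Function.Embedding.coeFn_mk, sub_eq_zero]
    constructor
    · rintro ⟨hne, heq⟩
      have h11 : q.1.1 = q.2.1 := by
        apply hFinj
        rw [← hFdep ⟨q.1.1, q.1.2⟩, ← hFdep ⟨q.2.1, q.2.2⟩]
        exact heq
      refine ⟨(q.1.1, (q.1.2, q.2.2)), ?_, ?_⟩
      · simp only [Finset.mem_offDiag, Finset.mem_univ, true_and]
        exact fun hcon => hne (Prod.ext h11 hcon)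
      · exact Prod.ext (Prod.ext rfl rfl) (Prod.ext h11 rfl)
    · rintro ⟨a, ha, rfl⟩
      refine ⟨?_, rfl⟩
      intro hcon
      exact ha (congrArg Prod.snd hcon)
  show (Finset.univ.offDiag.filter _).val.map _ = _
  rw [hW, Finset.map_val, Multiset.map_map, Finset.product_val]
  rw [show ((Finset.univ : Finset (Fin (m+1))).val ×ˢ ((Finset.univ : Finset (Fin 2)).offDiag).val)
      = (Finset.univ : Finset (Fin (m+1))).val.bind
          (fun a => Multiset.map (Prod.mk a) ((Finset.univ : Finset (Fin 2)).offDiag).val)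
      from rfl]
  rw [Multiset.map_bind]
  rw [show ({1, -1} : Multiset Fq) = (1 : Fq) ::ₘ {(-1 : Fq)} from rfl, Multiset.cons_bind,
    Multiset.singleton_bind, Multiset.map_map, Multiset.map_map]
  have hr : Multiset.map ((fun z => (1:Fq) * z) ∘ fun i => 2 * y i) (Finset.univ : Finset (Fin (m+1))).val +
      Multiset.map ((fun z => (-1:Fq) * z) ∘ fun i => 2 * y i) (Finset.univ : Finset (Fin (m+1))).val
      = (Finset.univ : Finset (Fin (m+1))).val.bind
          (fun i => ({((fun z => (1:Fq) * z) ∘ fun i => 2 * y i) i} : Multiset Fq)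
            + ({((fun z => (-1:Fq) * z) ∘ fun i => 2 * y i) i} : Multiset Fq)) := by
    rw [Multiset.bind_add, Multiset.bind_singleton, Multiset.bind_singleton]
  rw [hr]
  apply Multiset.bind_congr
  intro i hi
  rw [Multiset.map_map, od2val]
  show Multiset.map _ (((0:Fin 2),(1:Fin 2)) ::ₘ {((1:Fin 2),(0:Fin 2))}) = _
  rw [Multiset.map_cons, Multiset.map_singleton]
  simp only [Function.comp_apply, paley2snd, he]
  norm_num
  rw [show y i + y i = 2 * y i from by ring, show -y i - y i = -(2 * y i) from by ring]

end mainsec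

/-- Lemma 3.14: for `p ≡ 3 (mod 4)` a prime power, `δ` a generator of the nonzero
squares of `F_p`, `q` odd and arbitrary `y, y₁, …, y_m ∈ F_q^*` (`m = (p-1)/2`),
for each nonzero `h ∈ F_p` the multiset `T_h` has the form `{1,-1} · D_h` for a
multiset `D_h` of size `(p+1)/2 = m+1` all of whose entries are of the form
`yᵢ ± yⱼ` or `yᵢ ± y`, and `T_h = T_{-h}`; moreover
`T_0 = {1,-1} · (2 · [y, y₁, …, y_m])`. -/
theorem paper_stmt_17 {Fp Fq : Type*} [Field Fp] [Fintype Fp] [DecidableEq Fp] [Field Fq]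
    (m : ℕ) (hm : Fintype.card Fp = 2 * m + 1) (hp4 : Fintype.card Fp % 4 = 3)
    (δ : Fp) (hδ : ∀ x : Fp, (x ≠ 0 ∧ IsSquare x) ↔ ∃ i : ℕ, δ ^ i = x)
    (h2 : (2 : Fq) ≠ 0)
    (y : Fin (m + 1) → Fq) (hy : ∀ i, y i ≠ 0) :
    (∀ h : Fp, h ≠ 0 →
      (∃ Dh : Multiset Fq,
        Tdiff (paley2fst δ m) (paley2snd y) h =
          (({1, -1} : Multiset Fq).bind fun c => Dh.map fun z => c * z) ∧
        Multiset.card Dh = m + 1 ∧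
        ∀ z ∈ Dh, ∃ i j : Fin (m + 1), z = y i - y j ∨ z = y i + y j) ∧
      Tdiff (paley2fst δ m) (paley2snd y) h =
        Tdiff (paley2fst δ m) (paley2snd y) (-h)) ∧
    Tdiff (paley2fst δ m) (paley2snd y) 0 =
      (({1, -1} : Multiset Fq).bind fun c =>
        ((Finset.univ : Finset (Fin (m + 1))).val.map fun i => 2 * y i).map
          fun z => c * z) := by
  have h2p : (2 : Fp) ≠ 0 := two_ne_zero_Fp m hm
  have hm1 : 1 ≤ m := by
    have := Fintype.one_lt_card (α := Fp)
    omega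
  have hord : orderOf δ = m := delta_facts m hm h2p (card_nonzero_squares m hm h2p) hδ
  have hδ0 : δ ≠ 0 := ((hδ δ).mpr ⟨1, pow_one δ⟩).1
  have hginj : Function.Injective (fun i : Fin (m + 1) => if i = 0 then 0 else δ ^ (i : ℕ)) :=
    g_inj m hδ0 hord
  have hgF : ∀ i : Fin (m+1), paley2fst δ m (i, (0:Fin 2))
      = (fun i : Fin (m + 1) => if i = 0 then 0 else δ ^ (i : ℕ)) i := fun i => rfl
  have hgrange : ∀ x : Fp, IsSquare x ↔
      ∃ i : Fin (m+1), (fun i : Fin (m + 1) => if i = 0 then 0 else δ ^ (i : ℕ)) i = x :=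
    g_range m hm1 hδ hord
  set g : Fin (m+1) → Fp := fun i : Fin (m + 1) => if i = 0 then 0 else δ ^ (i : ℕ) with hgdef
  constructor
  · intro h hh
    set P : Finset (Fin (m+1) × Fin (m+1)) := Finset.univ.filter
      (fun ij : Fin (m+1) × Fin (m+1) =>
        paley2fst δ m (ij.1, 0) - paley2fst δ m (ij.2, 0) = h) with hP
    have hmemP : ∀ ij : Fin (m+1) × Fin (m+1), ij ∈ P ↔ g ij.1 - g ij.2 = h := by
      intro ij
      rw [hP, Finset.mem_filter]
      constructor
      · rintro ⟨-, hq⟩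
        rw [← hgF, ← hgF]
        exact hq
      · intro hq
        exact ⟨Finset.mem_univ _, hq⟩
    have hPV : P.card = (Vset h).card := by
      apply Finset.card_bij (fun ij _ => g ij.2)
      · intro ij hij
        rw [hmemP] at hij
        rw [mem_Vset]
        constructor
        · exact (hgrange _).mpr ⟨ij.2, rfl⟩
        · refine (hgrange _).mpr ⟨ij.1, ?_⟩
          linear_combination hij
      · intro ij hij ij' hij' heq
        rw [hmemP] at hij hij'
        have h2' : ij.2 = ij'.2 := hginj heq
        have h1' : ij.1 = ij'.1 := by
          apply hginj
          show g ij.1 = g ij'.1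
          rw [show g ij.1 = h + g ij.2 from by linear_combination hij,
            show g ij'.1 = h + g ij'.2 from by linear_combination hij', heq]
        exact Prod.ext h1' h2'
      · intro v hv
        rw [mem_Vset] at hv
        obtain ⟨j, hj⟩ := (hgrange v).mp hv.1
        obtain ⟨i, hi⟩ := (hgrange (v + h)).mp hv.2
        refine ⟨(i, j), ?_, hj⟩
        rw [hmemP]
        show g i - g j = h
        rw [hi, hj]
        ring
    have hPcard : 2 * P.card = m + 1 := by
      rw [hPV]
      exact Vset_card_eq m hm hp4 h2p hh
    refine ⟨⟨P.val.bind (fun ij => ({y ij.1 - y ij.2, y ij.1 + y ij.2} : Multiset Fq)),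
        ?_, ?_, ?_⟩, ?_⟩
    · rw [Tdiff_bind m δ y hh]
      rw [show ({1, -1} : Multiset Fq) = (1 : Fq) ::ₘ {(-1 : Fq)} from rfl, Multiset.cons_bind,
        Multiset.singleton_bind, Multiset.map_bind, Multiset.map_bind, ← Multiset.bind_add]
      apply Multiset.bind_congr
      intro ij hij
      congr 1
      rw [show (fun z => (1:Fq) * z) = id from by funext z; simp, Multiset.map_id]
    · rw [Multiset.card_bind]
      have : Multiset.map (Multiset.card ∘ fun ij : Fin (m+1) × Fin (m+1) =>
          ({y ij.1 - y ij.2, y ij.1 + y ij.2} : Multiset Fq)) P.val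
          = Multiset.map (fun _ => 2) P.val := by
        apply Multiset.map_congr rfl
        intro ij _
        rfl
      rw [this, Multiset.map_const', Multiset.sum_replicate, smul_eq_mul]
      rw [mul_comm]
      exact hPcard
    · intro z hz
      rw [Multiset.mem_bind] at hz
      obtain ⟨ij, -, hz⟩ := hz
      rw [Multiset.insert_eq_cons, Multiset.mem_cons, Multiset.mem_singleton] at hz
      exact ⟨ij.1, ij.2, hz⟩
    · exact (Tdiff_neg m δ y h).symm
  · exact Tdiff_zero m δ y (fun i j hij => hginj (by rw [← hgF, ← hgF]; exact hij))
end
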